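/- Let 𝒜 be a conformal net and H, K ∈ Rep(𝒜). The path continuation γ^•: H(z₀)⊠K(ζ₀) → H(z₁)⊠K(ζ₁) associated to a path γ in Conf₂(S¹) is independent of the choice of partition of [0,1] used to define it, and homotopic paths (with fixed endpoints) in Conf₂(S¹) induce the same path continuation. -/

import Mathlib

noncomputable section

namespace CNet

/-! ## Conformal nets and their representations -/

/-- An interval of the circle: an open, connected, non-empty, non-dense subset of `S¹`. -/
def IsInterval (s : Set Circle) : Prop :=
  IsOpen s ∧ IsConnected s ∧ ¬ Dense s

/-- The complement interval `I^c`: the interior of the set-theoretic complement. -/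
def intCompl (s : Set Circle) : Set Circle :=
  interior sᶜ

/-- The (open) lower hemisphere `S¹₋` of the circle. -/
def lowerHemi : Set Circle := {z : Circle | (z : ℂ).im < 0}

/-- The (open) upper hemisphere `S¹₊` of the circle. -/
def upperHemi : Set Circle := {z : Circle | 0 < (z : ℂ).im}

/-- A conformal net on `S¹` (core data): a vacuum Hilbert space `H0` with vacuum vector `Ω`,
von Neumann algebras `A I ⊆ B(H0)` indexed by (all subsets, constrained on) intervals `I`,
satisfying isotony, locality, rotation covariance (for the rotation subgroup `Rot ≅ Circle`
of `Möb`, acting on `S¹` by multiplication), invariance and cyclicity of the vacuum. -/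
structure ConformalNet (H0 : Type*) [NormedAddCommGroup H0] [InnerProductSpace ℂ H0]
    [CompleteSpace H0] where
  Ω : H0
  Ω_ne_zero : Ω ≠ 0
  A : Set Circle → VonNeumannAlgebra H0
  isotony : ∀ ⦃s t : Set Circle⦄, IsInterval s → IsInterval t → s ⊆ t →
    ∀ ⦃x : H0 →L[ℂ] H0⦄, x ∈ A s → x ∈ A t
  locality : ∀ ⦃s t : Set Circle⦄, IsInterval s → IsInterval t → Disjoint s t →
    ∀ x ∈ A s, ∀ y ∈ A t, x * y = y * x
  /-- The unitary representation of the rotation group `Rot ≅ Circle ⊆ Möb` on `H0`. -/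
  rotU : Circle → (H0 →L[ℂ] H0)
  rotU_mem_unitary : ∀ z, rotU z ∈ unitary (H0 →L[ℂ] H0)
  rotU_one : rotU 1 = 1
  rotU_mul : ∀ z w, rotU (z * w) = rotU z * rotU w
  rotU_continuous : ∀ ξ : H0, Continuous fun z => rotU z ξ
  rot_covariant : ∀ (z : Circle) ⦃s : Set Circle⦄, IsInterval s →
    ∀ x ∈ A s, rotU z * x * rotU z⁻¹ ∈ A ((z * ·) '' s)
  vacuum_invariant : ∀ z, rotU z Ω = Ω
  cyclic : Dense ((Submodule.span ℂ
      {ξ : H0 | ∃ s, IsInterval s ∧ ∃ x ∈ A s, ξ = x Ω} : Submodule ℂ H0) : Set H0)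

variable {H0 : Type*} [NormedAddCommGroup H0] [InnerProductSpace ℂ H0] [CompleteSpace H0]

/-- A representation of a conformal net: a Hilbert space `H` together with compatible
`*`-homomorphisms `π_I : 𝒜(I) → B(H)` (encoded as maps `B(H0) → B(H)` which are
`*`-homomorphisms on `𝒜(I)`). -/
structure NetRep (𝒜 : ConformalNet H0) (H : Type*) [NormedAddCommGroup H]
    [InnerProductSpace ℂ H] [CompleteSpace H] where
  π : Set Circle → (H0 →L[ℂ] H0) → (H →L[ℂ] H)
  π_add : ∀ (s : Set Circle) ⦃x y⦄, x ∈ 𝒜.A s → y ∈ 𝒜.A s → π s (x + y) = π s x + π s y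
  π_smul : ∀ (s : Set Circle) (c : ℂ) ⦃x⦄, x ∈ 𝒜.A s → π s (c • x) = c • π s x
  π_mul : ∀ (s : Set Circle) ⦃x y⦄, x ∈ 𝒜.A s → y ∈ 𝒜.A s → π s (x * y) = π s x * π s y
  π_star : ∀ (s : Set Circle) ⦃x⦄, x ∈ 𝒜.A s → π s (star x) = star (π s x)
  π_one : ∀ s : Set Circle, π s 1 = 1
  compat : ∀ ⦃s t : Set Circle⦄, IsInterval s → IsInterval t → s ⊆ t →
    ∀ ⦃x⦄, x ∈ 𝒜.A s → π t x = π s x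

variable {𝒜 : ConformalNet H0}
variable {H K R : Type*} [NormedAddCommGroup H] [InnerProductSpace ℂ H] [CompleteSpace H]
  [NormedAddCommGroup K] [InnerProductSpace ℂ K] [CompleteSpace K]
  [NormedAddCommGroup R] [InnerProductSpace ℂ R] [CompleteSpace R]

/-- The vacuum representation of `𝒜` on `H0`. -/
def ConformalNet.vac (𝒜 : ConformalNet H0) : NetRep 𝒜 H0 where
  π _ x := x
  π_add _ _ _ _ _ := rfl
  π_smul _ _ _ _ := rfl
  π_mul _ _ _ _ _ := rfl
  π_star _ _ _ := rfl
  π_one _ := rfl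
  compat _ _ _ _ _ _ _ := rfl

/-- `Hom_{𝒜(s)}(H0, H)`: bounded operators intertwining the `𝒜(s)`-actions. -/
def NetRep.inter {H : Type*} [NormedAddCommGroup H] [InnerProductSpace ℂ H] [CompleteSpace H]
    (ρ : NetRep 𝒜 H) (s : Set Circle) : Set (H0 →L[ℂ] H) :=
  {T | ∀ ⦃x⦄, x ∈ 𝒜.A s → T ∘L x = ρ.π s x ∘L T}

/-- Morphisms of representations: bounded maps intertwining all the `𝒜(I)`-actions. -/
def IsRepMorphism {H K : Type*} [NormedAddCommGroup H] [InnerProductSpace ℂ H]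
    [CompleteSpace H] [NormedAddCommGroup K] [InnerProductSpace ℂ K] [CompleteSpace K]
    (ρH : NetRep 𝒜 H) (ρK : NetRep 𝒜 K) (F : H →L[ℂ] K) : Prop :=
  ∀ ⦃s : Set Circle⦄, IsInterval s → ∀ ⦃x⦄, x ∈ 𝒜.A s → F ∘L ρH.π s x = ρK.π s x ∘L F

/-- The set `H(I)` of `I`-bounded vectors of a representation. -/
def NetRep.bdd {H : Type*} [NormedAddCommGroup H] [InnerProductSpace ℂ H] [CompleteSpace H]
    (ρ : NetRep 𝒜 H) (I : Set Circle) : Set H :=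
  {ξ | ∃ T ∈ ρ.inter (intCompl I), T 𝒜.Ω = ξ}

open Classical in
/-- `Z(ξ, I)`: a choice of an operator `T ∈ Hom_{𝒜(I^c)}(H0,H)` with `T Ω = ξ`
(the unique such operator when `ξ ∈ H(I)`, by the Reeh–Schlieder theorem). -/
def NetRep.Z {H : Type*} [NormedAddCommGroup H] [InnerProductSpace ℂ H] [CompleteSpace H]
    (ρ : NetRep 𝒜 H) (I : Set Circle) (ξ : H) : H0 →L[ℂ] H :=
  if h : ∃ T ∈ ρ.inter (intCompl I), T 𝒜.Ω = ξ then h.choose else 0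

theorem NetRep.Z_spec {H : Type*} [NormedAddCommGroup H] [InnerProductSpace ℂ H]
    [CompleteSpace H] (ρ : NetRep 𝒜 H) (I : Set Circle) (ξ : H) (h : ξ ∈ ρ.bdd I) :
    ρ.Z I ξ ∈ ρ.inter (intCompl I) ∧ ρ.Z I ξ 𝒜.Ω = ξ := by
  classical
  rw [NetRep.Z, dif_pos (show ∃ T ∈ ρ.inter (intCompl I), T 𝒜.Ω = ξ from h)]
  exact (show ∃ T ∈ ρ.inter (intCompl I), T 𝒜.Ω = ξ from h).choose_spec

/-! ## Connes fusion -/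

/-- The inner product `⟨Z(η',J)* Z(η,J) Z(ξ',I)* Z(ξ,I) Ω , Ω⟩` defining the Connes fusion
`H(I) ⊠ K(J)` over two disjoint intervals. -/
def fusionInner (𝒜 : ConformalNet H0) (ρH : NetRep 𝒜 H) (ρK : NetRep 𝒜 K)
    (I J : Set Circle) (ξ : H) (η : K) (ξ' : H) (η' : K) : ℂ :=
  inner ℂ ((ContinuousLinearMap.adjoint (ρK.Z J η'))
      ((ρK.Z J η) ((ContinuousLinearMap.adjoint (ρH.Z I ξ')) ((ρH.Z I ξ) 𝒜.Ω)))) 𝒜.Ω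

/-- The inner product `⟨π^K_I(Z(ξ',I)* Z(ξ,I)) η , η'⟩` defining the Connes fusion
`H(I) ⊠ K` over `I` on the left. -/
def leftFusionInner (𝒜 : ConformalNet H0) (ρH : NetRep 𝒜 H) (ρK : NetRep 𝒜 K)
    (I : Set Circle) (ξ : H) (η : K) (ξ' : H) (η' : K) : ℂ :=
  inner ℂ ((ρK.π I ((ContinuousLinearMap.adjoint (ρH.Z I ξ')) ∘L (ρH.Z I ξ))) η) η'

/-- The inner product `⟨π^H_J(Z(η',J)* Z(η,J)) ξ , ξ'⟩` defining the Connes fusion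
`H ⊠ K(J)` over `J` on the right. -/
def rightFusionInner (𝒜 : ConformalNet H0) (ρH : NetRep 𝒜 H) (ρK : NetRep 𝒜 K)
    (J : Set Circle) (ξ : H) (η : K) (ξ' : H) (η' : K) : ℂ :=
  inner ℂ ((ρH.π J ((ContinuousLinearMap.adjoint (ρK.Z J η')) ∘L (ρK.Z J η))) ξ) ξ'

/-- `(F, u)` realizes the Connes fusion `H(I) ⊠ K(J)` of `H` and `K` over the disjoint
intervals `I, J`: the completion of `H(I) ⊗ K(J)` for the fusion inner product. -/
structure IsConnesFusion (𝒜 : ConformalNet H0) (ρH : NetRep 𝒜 H) (ρK : NetRep 𝒜 K)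
    (I J : Set Circle) {F : Type*} [NormedAddCommGroup F] [InnerProductSpace ℂ F]
    [CompleteSpace F] (u : H → K → F) : Prop where
  inner_eq : ∀ ξ ∈ ρH.bdd I, ∀ ξ' ∈ ρH.bdd I, ∀ η ∈ ρK.bdd J, ∀ η' ∈ ρK.bdd J,
    (inner ℂ (u ξ η) (u ξ' η') : ℂ) = fusionInner 𝒜 ρH ρK I J ξ η ξ' η'
  dense_span : Dense ((Submodule.span ℂ
    {v : F | ∃ ξ ∈ ρH.bdd I, ∃ η ∈ ρK.bdd J, v = u ξ η} : Submodule ℂ F) : Set F)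

/-- `(F, u)` realizes the Connes fusion `H(I) ⊠ K` of `H` and `K` over `I` on the left. -/
structure IsLeftFusion (𝒜 : ConformalNet H0) (ρH : NetRep 𝒜 H) (ρK : NetRep 𝒜 K)
    (I : Set Circle) {F : Type*} [NormedAddCommGroup F] [InnerProductSpace ℂ F]
    [CompleteSpace F] (u : H → K → F) : Prop where
  inner_eq : ∀ ξ ∈ ρH.bdd I, ∀ ξ' ∈ ρH.bdd I, ∀ (η η' : K),
    (inner ℂ (u ξ η) (u ξ' η') : ℂ) = leftFusionInner 𝒜 ρH ρK I ξ η ξ' η'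
  dense_span : Dense ((Submodule.span ℂ
    {v : F | ∃ ξ ∈ ρH.bdd I, ∃ η : K, v = u ξ η} : Submodule ℂ F) : Set F)

/-- `(F, u)` realizes the Connes fusion `H ⊠ K(J)` of `H` and `K` over `J` on the right. -/
structure IsRightFusion (𝒜 : ConformalNet H0) (ρH : NetRep 𝒜 H) (ρK : NetRep 𝒜 K)
    (J : Set Circle) {F : Type*} [NormedAddCommGroup F] [InnerProductSpace ℂ F]
    [CompleteSpace F] (u : H → K → F) : Prop where
  inner_eq : ∀ (ξ ξ' : H), ∀ η ∈ ρK.bdd J, ∀ η' ∈ ρK.bdd J,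
    (inner ℂ (u ξ η) (u ξ' η') : ℂ) = rightFusionInner 𝒜 ρH ρK J ξ η ξ' η'
  dense_span : Dense ((Submodule.span ℂ
    {v : F | ∃ ξ : H, ∃ η ∈ ρK.bdd J, v = u ξ η} : Submodule ℂ F) : Set F)

/-! ## Systems of fusions and path continuations -/

/-- Pairs of subsets of the circle. -/
abbrev CPair : Type := Set Circle × Set Circle

/-- A pair of disjoint intervals. -/
def GoodPair (P : CPair) : Prop := IsInterval P.1 ∧ IsInterval P.2 ∧ Disjoint P.1 P.2

def subPair (P Q : CPair) : Prop := P.1 ⊆ Q.1 ∧ P.2 ⊆ Q.2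

def memPair (x : Circle × Circle) (P : CPair) : Prop := x.1 ∈ P.1 ∧ x.2 ∈ P.2

/-- The configuration space `Conf₂(S¹)` of two distinct points of the circle. -/
def Conf2 : Type := {x : Circle × Circle // x.1 ≠ x.2}

instance : TopologicalSpace Conf2 :=
  inferInstanceAs (TopologicalSpace {x : Circle × Circle // x.1 ≠ x.2})

/-- A bundled (separable) complex Hilbert space. -/
structure HilbertC where
  V : Type
  [nacg : NormedAddCommGroup V]
  [ips : InnerProductSpace ℂ V]
  [cs : CompleteSpace V]

attribute [instance] HilbertC.nacg HilbertC.ips HilbertC.cs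

/-- A system of Hilbert spaces indexed by subsets of the circle, together with the canonical
unitary equivalences induced by inclusions of intervals. -/
structure IntervalSystem where
  F : Set Circle → HilbertC
  incl : ∀ ⦃I J : Set Circle⦄, I ⊆ J → ((F I).V ≃ₗᵢ[ℂ] (F J).V)

/-- `PathCont1 S γ s t I J V` : `V` is (a composite of canonical equivalences defining)
the path continuation along `γ|_{[s,t]}` from the space attached to the interval `I` to the
space attached to the interval `J`.  A `basic` step corresponds to a piece of path contained
in a single interval `R`; general continuations are composites of basic ones. -/
inductive PathCont1 (S : IntervalSystem) {z₀ z₁ : Circle} (γ : Path z₀ z₁) :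
    ∀ (s t : unitInterval) (I J : Set Circle), ((S.F I).V ≃ₗᵢ[ℂ] (S.F J).V) → Prop
  | basic (s t : unitInterval) (hst : s ≤ t) (I J R I' J' : Set Circle)
      (hI : IsInterval I) (hJ : IsInterval J) (hR : IsInterval R)
      (hI' : IsInterval I') (hJ' : IsInterval J')
      (hsI' : γ s ∈ I') (htJ' : γ t ∈ J')
      (hI'I : I' ⊆ I) (hI'R : I' ⊆ R) (hJ'J : J' ⊆ J) (hJ'R : J' ⊆ R)
      (hcov : ∀ r : unitInterval, s ≤ r → r ≤ t → γ r ∈ R) :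
      PathCont1 S γ s t I J
        (((S.incl hI'I).symm.trans (S.incl hI'R)).trans
          ((S.incl hJ'R).symm.trans (S.incl hJ'J)))
  | trans {s t r : unitInterval} {I J L : Set Circle}
      {V : (S.F I).V ≃ₗᵢ[ℂ] (S.F J).V} {W : (S.F J).V ≃ₗᵢ[ℂ] (S.F L).V} :
      PathCont1 S γ s t I J V → PathCont1 S γ t r J L W →
      PathCont1 S γ s r I L (V.trans W)

/-- `V` is the path continuation `α^• : H(I) ⊠ K → H(J) ⊠ K` along the full path `γ`. -/
def IsPathCont1 (S : IntervalSystem) {z₀ z₁ : Circle} (γ : Path z₀ z₁) (I J : Set Circle)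
    (V : (S.F I).V ≃ₗᵢ[ℂ] (S.F J).V) : Prop :=
  PathCont1 S γ 0 1 I J V

/-- A system of Hilbert spaces indexed by pairs of subsets of the circle, together with the
canonical unitary equivalences induced by inclusions. -/
structure PairSystem where
  F : CPair → HilbertC
  incl : ∀ ⦃P Q : CPair⦄, subPair P Q → ((F P).V ≃ₗᵢ[ℂ] (F Q).V)

/-- Path continuation (over pairs of intervals) along a path in `Conf₂(S¹)`. -/
inductive PathCont2 (S : PairSystem) {a₀ a₁ : Conf2} (γ : Path a₀ a₁) :
    ∀ (s t : unitInterval) (P Q : CPair), ((S.F P).V ≃ₗᵢ[ℂ] (S.F Q).V) → Prop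
  | basic (s t : unitInterval) (hst : s ≤ t) (P Q R P' Q' : CPair)
      (hP : GoodPair P) (hQ : GoodPair Q) (hR : GoodPair R)
      (hP' : GoodPair P') (hQ' : GoodPair Q')
      (hsP' : memPair (γ s).val P') (htQ' : memPair (γ t).val Q')
      (hP'P : subPair P' P) (hP'R : subPair P' R) (hQ'Q : subPair Q' Q) (hQ'R : subPair Q' R)
      (hcov : ∀ r : unitInterval, s ≤ r → r ≤ t → memPair (γ r).val R) :
      PathCont2 S γ s t P Q
        (((S.incl hP'P).symm.trans (S.incl hP'R)).trans
          ((S.incl hQ'R).symm.trans (S.incl hQ'Q)))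
  | trans {s t r : unitInterval} {P Q L : CPair}
      {V : (S.F P).V ≃ₗᵢ[ℂ] (S.F Q).V} {W : (S.F Q).V ≃ₗᵢ[ℂ] (S.F L).V} :
      PathCont2 S γ s t P Q V → PathCont2 S γ t r Q L W →
      PathCont2 S γ s r P L (V.trans W)

/-- `V` is the path continuation `γ^• : H(I₀) ⊠ K(J₀) → H(I₁) ⊠ K(J₁)` along the full
path `γ` in `Conf₂(S¹)`. -/
def IsPathCont2 (S : PairSystem) {a₀ a₁ : Conf2} (γ : Path a₀ a₁) (P Q : CPair)
    (V : (S.F P).V ≃ₗᵢ[ℂ] (S.F Q).V) : Prop :=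
  PathCont2 S γ 0 1 P Q V

/-- A full system of two-interval Connes fusions `H(I) ⊠ K(J)` of a fixed pair of
representations, together with the canonical equivalences induced by inclusions of
intervals (characterized by sending generators to generators). -/
structure FusionSystem (𝒜 : ConformalNet H0) {H K : Type*} [NormedAddCommGroup H]
    [InnerProductSpace ℂ H] [CompleteSpace H] [NormedAddCommGroup K] [InnerProductSpace ℂ K]
    [CompleteSpace K] (ρH : NetRep 𝒜 H) (ρK : NetRep 𝒜 K) extends PairSystem where
  u : ∀ P : CPair, H → K → (F P).V
  isFusion : ∀ ⦃P : CPair⦄, GoodPair P → IsConnesFusion 𝒜 ρH ρK P.1 P.2 (u P)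
  incl_spec : ∀ ⦃P Q : CPair⦄ (h : subPair P Q), GoodPair P → GoodPair Q →
    ∀ ξ ∈ ρH.bdd P.1, ∀ η ∈ ρK.bdd P.2, incl h (u P ξ η) = u Q ξ η

/-- A full system of left Connes fusions `H(I) ⊠ K` of a fixed pair of representations,
together with the canonical equivalences induced by inclusions of intervals. -/
structure LeftFusionSystem (𝒜 : ConformalNet H0) {H K : Type*} [NormedAddCommGroup H]
    [InnerProductSpace ℂ H] [CompleteSpace H] [NormedAddCommGroup K] [InnerProductSpace ℂ K]
    [CompleteSpace K] (ρH : NetRep 𝒜 H) (ρK : NetRep 𝒜 K) extends IntervalSystem where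
  u : ∀ I : Set Circle, H → K → (F I).V
  isFusion : ∀ ⦃I : Set Circle⦄, IsInterval I → IsLeftFusion 𝒜 ρH ρK I (u I)
  incl_spec : ∀ ⦃I J : Set Circle⦄ (h : I ⊆ J), IsInterval I → IsInterval J →
    ∀ ξ ∈ ρH.bdd I, ∀ η : K, incl h (u I ξ η) = u J ξ η

/-- A full system of right Connes fusions `H ⊠ K(J)` of a fixed pair of representations,
together with the canonical equivalences induced by inclusions of intervals. -/
structure RightFusionSystem (𝒜 : ConformalNet H0) {H K : Type*} [NormedAddCommGroup H]
    [InnerProductSpace ℂ H] [CompleteSpace H] [NormedAddCommGroup K] [InnerProductSpace ℂ K]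
    [CompleteSpace K] (ρH : NetRep 𝒜 H) (ρK : NetRep 𝒜 K) extends IntervalSystem where
  u : ∀ J : Set Circle, H → K → (F J).V
  isFusion : ∀ ⦃J : Set Circle⦄, IsInterval J → IsRightFusion 𝒜 ρH ρK J (u J)
  incl_spec : ∀ ⦃I J : Set Circle⦄ (h : I ⊆ J), IsInterval I → IsInterval J →
    ∀ ξ : H, ∀ η ∈ ρK.bdd I, incl h (u I ξ η) = u J ξ η

/-- `ρF` is the canonical `𝒜`-action on the left Connes fusion `H(I₀) ⊠ K`: for any interval
`L`, the action of `𝒜(L)` is obtained by conjugating the factorwise action on the first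
factor by a path continuation from `I₀` to `L`. -/
def IsLeftFusionAction {𝒜 : ConformalNet H0} {H K : Type*} [NormedAddCommGroup H]
    [InnerProductSpace ℂ H] [CompleteSpace H] [NormedAddCommGroup K] [InnerProductSpace ℂ K]
    [CompleteSpace K] {ρH : NetRep 𝒜 H} {ρK : NetRep 𝒜 K}
    (S : LeftFusionSystem 𝒜 ρH ρK) (I₀ : Set Circle)
    (ρF : NetRep 𝒜 (S.F I₀).V) : Prop :=
  ∀ ⦃L : Set Circle⦄, IsInterval L → ∀ ⦃z₀ z₁ : Circle⦄ (γ : Path z₀ z₁)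
    (V : (S.F I₀).V ≃ₗᵢ[ℂ] (S.F L).V), IsPathCont1 S.toIntervalSystem γ I₀ L V →
    ∀ ⦃x⦄, x ∈ 𝒜.A L → ∀ ξ ∈ ρH.bdd L, ∀ η : K,
      ρF.π L x (V.symm (S.u L ξ η)) = V.symm (S.u L (ρH.π L x ξ) η)

/-- `ρF` is the canonical `𝒜`-action on the right Connes fusion `H ⊠ K(J₀)`. -/
def IsRightFusionAction {𝒜 : ConformalNet H0} {H K : Type*} [NormedAddCommGroup H]
    [InnerProductSpace ℂ H] [CompleteSpace H] [NormedAddCommGroup K] [InnerProductSpace ℂ K]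
    [CompleteSpace K] {ρH : NetRep 𝒜 H} {ρK : NetRep 𝒜 K}
    (S : RightFusionSystem 𝒜 ρH ρK) (J₀ : Set Circle)
    (ρF : NetRep 𝒜 (S.F J₀).V) : Prop :=
  ∀ ⦃L : Set Circle⦄, IsInterval L → ∀ ⦃z₀ z₁ : Circle⦄ (γ : Path z₀ z₁)
    (V : (S.F J₀).V ≃ₗᵢ[ℂ] (S.F L).V), IsPathCont1 S.toIntervalSystem γ J₀ L V →
    ∀ ⦃x⦄, x ∈ 𝒜.A L → ∀ ξ : H, ∀ η ∈ ρK.bdd L,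
      ρF.π L x (V.symm (S.u L ξ η)) = V.symm (S.u L ξ (ρK.π L x η))

/-- The left action `π^l` on a two-interval fusion system, based at the pair `P₀`:
the action of `𝒜(L)` is `(γ^•)⁻¹ (π^H_L(x) ⊠ id) γ^•` for any path continuation `γ^•` from
`P₀` to a pair `(L, M)`. -/
def IsLeftAction2 {𝒜 : ConformalNet H0} {H K : Type*} [NormedAddCommGroup H]
    [InnerProductSpace ℂ H] [CompleteSpace H] [NormedAddCommGroup K] [InnerProductSpace ℂ K]
    [CompleteSpace K] {ρH : NetRep 𝒜 H} {ρK : NetRep 𝒜 K}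
    (S : FusionSystem 𝒜 ρH ρK) (P₀ : CPair)
    (ρF : NetRep 𝒜 (S.F P₀).V) : Prop :=
  ∀ ⦃Q : CPair⦄, GoodPair Q → ∀ ⦃a₀ a₁ : Conf2⦄ (γ : Path a₀ a₁)
    (V : (S.F P₀).V ≃ₗᵢ[ℂ] (S.F Q).V), IsPathCont2 S.toPairSystem γ P₀ Q V →
    ∀ ⦃x⦄, x ∈ 𝒜.A Q.1 → ∀ ξ ∈ ρH.bdd Q.1, ∀ η ∈ ρK.bdd Q.2,
      ρF.π Q.1 x (V.symm (S.u Q ξ η)) = V.symm (S.u Q (ρH.π Q.1 x ξ) η)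

/-- The right action `π^r` on a two-interval fusion system, based at the pair `P₀`:
the action of `𝒜(L)` is `(ϑ^•)⁻¹ (id ⊠ π^K_L(x)) ϑ^•` for any path continuation `ϑ^•` from
`P₀` to a pair `(M, L)`. -/
def IsRightAction2 {𝒜 : ConformalNet H0} {H K : Type*} [NormedAddCommGroup H]
    [InnerProductSpace ℂ H] [CompleteSpace H] [NormedAddCommGroup K] [InnerProductSpace ℂ K]
    [CompleteSpace K] {ρH : NetRep 𝒜 H} {ρK : NetRep 𝒜 K}
    (S : FusionSystem 𝒜 ρH ρK) (P₀ : CPair)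
    (ρF : NetRep 𝒜 (S.F P₀).V) : Prop :=
  ∀ ⦃Q : CPair⦄, GoodPair Q → ∀ ⦃a₀ a₁ : Conf2⦄ (γ : Path a₀ a₁)
    (V : (S.F P₀).V ≃ₗᵢ[ℂ] (S.F Q).V), IsPathCont2 S.toPairSystem γ P₀ Q V →
    ∀ ⦃x⦄, x ∈ 𝒜.A Q.2 → ∀ ξ ∈ ρH.bdd Q.1, ∀ η ∈ ρK.bdd Q.2,
      ρF.π Q.2 x (V.symm (S.u Q ξ η)) = V.symm (S.u Q ξ (ρK.π Q.2 x η))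

/-! ## The conformal symmetry group `Diff⁺_𝒜(S¹)` and conformal covariance -/

/-- An abstract model for the central extension `Diff⁺_𝒜(S¹)` of the universal cover of
`Diff⁺(S¹)` determined by the projective vacuum representation `U` of a conformal net `𝒜`:
a topological group acting on the circle, unitarily represented on the vacuum space, with
distinguished localized subgroups `DI`, generated by them, covariant for the net, with a
central `U(1)` and a distinguished one-parameter subgroup `rot` of lifted rotations
(`rot t = exp̃(i t L₀)`). -/
structure DiffCover (𝒜 : ConformalNet H0) where
  D : Type
  [grp : Group D]
  [top : TopologicalSpace D]
  act : D → Circle → Circle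
  act_one : ∀ z, act 1 z = z
  act_mul : ∀ g h z, act (g * h) z = act g (act h z)
  Uvac : D → (H0 →L[ℂ] H0)
  Uvac_mem_unitary : ∀ g, Uvac g ∈ unitary (H0 →L[ℂ] H0)
  Uvac_one : Uvac 1 = 1
  Uvac_mul : ∀ g h, Uvac (g * h) = Uvac g * Uvac h
  Uvac_continuous : ∀ ξ : H0, Continuous fun g => Uvac g ξ
  /-- The localized subgroup `Diff⁺_𝒜(I)` of elements supported in the interval `I`. -/
  DI : Set Circle → Subgroup D
  localized : ∀ ⦃s : Set Circle⦄, IsInterval s → ∀ g ∈ DI s, Uvac g ∈ 𝒜.A s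
  localized_act : ∀ ⦃s : Set Circle⦄, IsInterval s → ∀ g ∈ DI s, ∀ z ∉ s, act g z = z
  generated : Subgroup.closure (⋃ s ∈ {s : Set Circle | IsInterval s}, (DI s : Set D)) = ⊤
  covariant : ∀ (g : D) ⦃s : Set Circle⦄, IsInterval s → ∀ x ∈ 𝒜.A s,
    Uvac g * x * Uvac g⁻¹ ∈ 𝒜.A (act g '' s)
  /-- The central `U(1) ≅ {V ∈ U(H0) | [V] = [id]}`. -/
  ctr : Circle → D
  ctr_central : ∀ c g, ctr c * g = g * ctr c
  ctr_mul : ∀ c c', ctr (c * c') = ctr c * ctr c'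
  Uvac_ctr : ∀ c, Uvac (ctr c) = (c : ℂ) • (1 : H0 →L[ℂ] H0)
  act_ctr : ∀ c z, act (ctr c) z = z
  /-- The lifted rotations `t ↦ exp̃(i t L₀)` in `M̃öb ⊆ Diff̃⁺(S¹)`. -/
  rot : ℝ → D
  rot_add : ∀ s t, rot (s + t) = rot s * rot t
  rot_continuous : Continuous rot
  act_rot : ∀ (t : ℝ) (z : Circle), act (rot t) z = Circle.exp t * z
  Uvac_rot : ∀ t : ℝ, Uvac (rot t) = 𝒜.rotU (Circle.exp t)

attribute [instance] DiffCover.grp DiffCover.top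

/-- The canonical conformal structure of a representation `H` of `𝒜`: a (strongly
continuous) unitary action of `Diff⁺_𝒜(S¹)` on `H` which acts by the local algebras on
localized elements, with the central `U(1)` acting in the standard way. -/
structure ConfCovariance {𝒜 : ConformalNet H0} (dc : DiffCover 𝒜) {H : Type*}
    [NormedAddCommGroup H] [InnerProductSpace ℂ H] [CompleteSpace H]
    (ρ : NetRep 𝒜 H) where
  Urep : dc.D → (H →L[ℂ] H)
  mem_unitary : ∀ g, Urep g ∈ unitary (H →L[ℂ] H)
  map_one : Urep 1 = 1
  map_mul : ∀ g h, Urep (g * h) = Urep g * Urep h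
  strong_continuous : ∀ ξ : H, Continuous fun g => Urep g ξ
  central : ∀ c : Circle, Urep (dc.ctr c) = (c : ℂ) • (1 : H →L[ℂ] H)
  localized : ∀ ⦃s : Set Circle⦄, IsInterval s → ∀ g ∈ dc.DI s, Urep g = ρ.π s (dc.Uvac g)

/-- The balance `θ_H := e^{-2πi L₀}`: the action on `H` of the lift
`exp̃(-2πi L₀) ∈ M̃öb` of the full clockwise rotation. -/
def ConfCovariance.theta {𝒜 : ConformalNet H0} {dc : DiffCover 𝒜} {H : Type*}
    [NormedAddCommGroup H] [InnerProductSpace ℂ H] [CompleteSpace H] {ρ : NetRep 𝒜 H}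
    (cc : ConfCovariance dc ρ) : H →L[ℂ] H :=
  cc.Urep (dc.rot (-(2 * Real.pi)))

end CNet

/-! ## Auxiliary geometry of the circle -/

open Real Set in
private lemma CNet.aux_two_pi_pos : (0:ℝ) < 2 * Real.pi := by positivity

namespace CNet
open Real Set

private lemma isOpenMap_cexp : IsOpenMap Circle.exp :=
  isLocalHomeomorph_circleExp.isOpenMap

private lemma cexp_ne {x y : ℝ} (h0 : 0 < x - y) (h2 : x - y < 2 * π) :
    Circle.exp x ≠ Circle.exp y := by
  intro h
  obtain ⟨m, hm⟩ := Circle.exp_eq_exp.mp h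
  have hx : x - y = m * (2 * π) := by linarith
  rcases le_or_gt m 0 with hm0 | hm0
  · have : (m : ℝ) * (2 * π) ≤ 0 :=
      mul_nonpos_of_nonpos_of_nonneg (by exact_mod_cast hm0) (by positivity)
    linarith
  · have hm1 : (1 : ℝ) ≤ (m : ℝ) := by exact_mod_cast hm0
    nlinarith [Real.pi_pos]

/-- The open arc `exp '' (a, b)`. -/
private def arc (a b : ℝ) : Set Circle := Circle.exp '' Set.Ioo a b

private lemma isOpen_arc (a b : ℝ) : IsOpen (arc a b) :=
  isOpenMap_cexp _ isOpen_Ioo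

private lemma mem_arc {a b t : ℝ} (h : t ∈ Set.Ioo a b) : Circle.exp t ∈ arc a b :=
  ⟨t, h, rfl⟩

private lemma isInterval_arc {a b : ℝ} (hab : a < b) (hlen : b - a < 2 * π) :
    IsInterval (arc a b) := by
  refine ⟨isOpen_arc a b, (isConnected_Ioo hab).image _ Circle.exp.continuous.continuousOn, ?_⟩
  intro hd
  have hcl : closure (arc a b) ⊆ Circle.exp '' Set.Icc a b :=
    closure_minimal (Set.image_mono Set.Ioo_subset_Icc_self)
      ((isCompact_Icc.image Circle.exp.continuous).isClosed)
  have hmem : Circle.exp ((a + b) / 2 + π) ∈ Circle.exp '' Set.Icc a b :=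
    hcl (hd _)
  obtain ⟨t, ht, he⟩ := hmem
  refine cexp_ne (x := (a + b) / 2 + π) (y := t) ?_ ?_ he.symm
  · have := ht.2; have := Real.pi_pos; linarith
  · have := ht.1; have := Real.pi_pos; linarith

private lemma cexp_left_mem_closure {a b : ℝ} (hab : a < b) :
    Circle.exp a ∈ closure (arc a b) := by
  rw [mem_closure_iff_nhds]
  intro U hU
  have hpre : Circle.exp ⁻¹' U ∈ nhds a :=
    (Circle.exp.continuous.continuousAt).preimage_mem_nhds hU
  obtain ⟨ε, hε, hball⟩ := Metric.mem_nhds_iff.mp hpre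
  set t := a + min ε (b - a) / 2 with ht
  have h1 : 0 < min ε (b - a) := lt_min hε (by linarith)
  have htb : t ∈ Set.Ioo a b := by
    constructor
    · simp only [ht]; linarith
    · have : min ε (b - a) ≤ b - a := min_le_right _ _
      simp only [ht]; linarith
  have htball : t ∈ Metric.ball a ε := by
    have : min ε (b - a) ≤ ε := min_le_left _ _
    simp only [Metric.mem_ball, Real.dist_eq, ht]
    rw [abs_of_nonneg (by linarith)]
    linarith
  exact ⟨Circle.exp t, hball htball, mem_arc htb⟩

private lemma cexp_right_mem_closure {a b : ℝ} (hab : a < b) :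
    Circle.exp b ∈ closure (arc a b) := by
  rw [mem_closure_iff_nhds]
  intro U hU
  have hpre : Circle.exp ⁻¹' U ∈ nhds b :=
    (Circle.exp.continuous.continuousAt).preimage_mem_nhds hU
  obtain ⟨ε, hε, hball⟩ := Metric.mem_nhds_iff.mp hpre
  set t := b - min ε (b - a) / 2 with ht
  have h1 : 0 < min ε (b - a) := lt_min hε (by linarith)
  have htb : t ∈ Set.Ioo a b := by
    constructor
    · have : min ε (b - a) ≤ b - a := min_le_right _ _
      simp only [ht]; linarith
    · simp only [ht]; linarith
  have htball : t ∈ Metric.ball b ε := by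
    have : min ε (b - a) ≤ ε := min_le_left _ _
    simp only [Metric.mem_ball, Real.dist_eq, ht]
    rw [abs_of_nonpos (by linarith)]
    linarith
  exact ⟨Circle.exp t, hball htball, mem_arc htb⟩

private lemma cexp_surj_Ico (a : ℝ) (w : Circle) :
    ∃ t ∈ Set.Ico a (a + 2 * π), Circle.exp t = w := by
  have h2π : (0:ℝ) < 2 * π := aux_two_pi_pos
  refine ⟨toIcoMod h2π a (Complex.arg (w : ℂ)), toIcoMod_mem_Ico h2π a _, ?_⟩
  have : Circle.exp (toIcoMod h2π a (Complex.arg (w : ℂ))) =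
      Circle.exp (Complex.arg (w : ℂ)) := by
    apply Circle.exp_eq_exp.mpr
    exact ⟨-toIcoDiv h2π a (Complex.arg (w : ℂ)), by
      rw [toIcoMod, zsmul_eq_mul]
      push_cast
      ring⟩
  rw [this]
  exact Circle.exp_arg w

/-- Every point of an open subset of the circle is contained in an interval
inside that subset. -/
private lemma exists_interval_subset {U : Set Circle} (hU : IsOpen U) {z : Circle}
    (hz : z ∈ U) : ∃ V : Set Circle, IsInterval V ∧ z ∈ V ∧ V ⊆ U := by
  set θ := Complex.arg (z : ℂ) with hθ
  have hexp : Circle.exp θ = z := Circle.exp_arg z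
  have hpre : Circle.exp ⁻¹' U ∈ nhds θ :=
    (Circle.exp.continuous.continuousAt).preimage_mem_nhds (hU.mem_nhds (hexp ▸ hz))
  obtain ⟨ε, hε, hball⟩ := Metric.mem_nhds_iff.mp hpre
  have hπ := Real.pi_pos
  set δ := min ε π / 2 with hδ
  have hδ0 : 0 < δ := by positivity
  refine ⟨arc (θ - δ) (θ + δ), isInterval_arc (by linarith) ?_, ?_, ?_⟩
  · have : min ε π ≤ π := min_le_right _ _
    simp only [hδ]; linarith
  · exact hexp ▸ mem_arc ⟨by linarith, by linarith⟩
  · rintro w ⟨t, ht, rfl⟩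
    apply hball
    have hmε : min ε π ≤ ε := min_le_left _ _
    simp only [Metric.mem_ball, Real.dist_eq]
    rw [abs_lt]
    constructor <;> [skip; skip] <;>
      · have := ht.1; have := ht.2; simp only [hδ] at *; linarith

/-- The slit chart of the circle based at `exp a`. -/
private noncomputable def slit (a : ℝ) : OpenPartialHomeomorph ℝ Circle :=
  have : Fact (0 < 2 * π) := ⟨aux_two_pi_pos⟩
  (AddCircle.openPartialHomeomorphCoe (2 * π) a).trans
    AddCircle.homeomorphCircle'.toOpenPartialHomeomorph

private lemma slit_source (a : ℝ) : (slit a).source = Set.Ioo a (a + 2 * π) := by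
  have : Fact (0 < 2 * π) := ⟨aux_two_pi_pos⟩
  simp [slit, OpenPartialHomeomorph.trans_source]

private lemma slit_apply (a x : ℝ) : slit a x = Circle.exp x := rfl

private lemma slit_target (a : ℝ) : (slit a).target = {Circle.exp a}ᶜ := by
  have : Fact (0 < 2 * π) := ⟨aux_two_pi_pos⟩
  ext w
  simp only [slit, OpenPartialHomeomorph.trans_target, Homeomorph.toOpenPartialHomeomorph_target,
    Set.mem_inter_iff, Set.mem_univ, true_and, Set.mem_preimage,
    Homeomorph.toOpenPartialHomeomorph_symm_apply, AddCircle.openPartialHomeomorphCoe_target,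
    Set.mem_compl_iff, Set.mem_singleton_iff]
  constructor
  · intro h hw
    apply h
    rw [hw, ← AddCircle.homeomorphCircle'_apply_mk a, Homeomorph.symm_apply_apply]
  · intro h hw
    apply h
    have hthis : w = AddCircle.homeomorphCircle' ((a : ℝ) : AddCircle (2 * π)) := by
      rw [← hw, Homeomorph.apply_symm_apply]
    exact hthis

/-- The complement interval of an interval is an interval. -/
private lemma isInterval_intCompl {s : Set Circle} (hs : IsInterval s) :
    IsInterval (intCompl s) := by
  obtain ⟨hso, hsc, hsd⟩ := hs
  have hπ := Real.pi_pos
  have hne : closure s ≠ Set.univ := fun h => hsd (by rwa [dense_iff_closure_eq])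
  obtain ⟨c, hc⟩ := (Set.ne_univ_iff_exists_notMem _).mp hne
  set θ₀ := Complex.arg (c : ℂ) with hθ₀
  have hexpθ₀ : Circle.exp θ₀ = c := Circle.exp_arg c
  set e := slit θ₀ with he
  have hst : s ⊆ e.target := by
    rw [he, slit_target, hexpθ₀]
    intro w hw
    simp only [Set.mem_compl_iff, Set.mem_singleton_iff]
    rintro rfl
    exact hc (subset_closure hw)
  set E := e.symm '' s with hE
  have hEopen : IsOpen E :=
    e.symm.isOpen_image_of_subset_source hso (by rw [OpenPartialHomeomorph.symm_source]; exact hst)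
  have hEconn : IsConnected E :=
    hsc.image _ (e.symm.continuousOn.mono (by rw [OpenPartialHomeomorph.symm_source]; exact hst))
  have hEsub : E ⊆ Set.Ioo θ₀ (θ₀ + 2 * π) := by
    rintro x ⟨w, hw, rfl⟩
    have h1 := e.map_target (hst hw)
    rwa [he, slit_source] at h1
  have hEexp : ∀ w ∈ s, Circle.exp (e.symm w) = w := by
    intro w hw
    have h1 : e (e.symm w) = w := e.right_inv (hst hw)
    rwa [he, slit_apply] at h1
  have hsE : s = Circle.exp '' E := by
    ext w
    constructor
    · intro hw; exact ⟨e.symm w, ⟨w, hw, rfl⟩, hEexp w hw⟩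
    · rintro ⟨x, ⟨w', hw', rfl⟩, rfl⟩
      rwa [hEexp w' hw']
  have hEne : E.Nonempty := hsc.nonempty.image _
  set A := sInf E with hA
  set B := sSup E with hB
  have hbddA : BddBelow E := ⟨θ₀, fun x hx => (hEsub hx).1.le⟩
  have hbddB : BddAbove E := ⟨θ₀ + 2 * π, fun x hx => (hEsub hx).2.le⟩
  have hEIoo : E = Set.Ioo A B := by
    apply Set.Subset.antisymm
    · intro x hx
      obtain ⟨δ, hδ, hball⟩ := Metric.isOpen_iff.mp hEopen x hx
      have hx1 : x - δ / 2 ∈ E := hball (by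
        rw [Metric.mem_ball, Real.dist_eq,
          show x - δ / 2 - x = -(δ / 2) by ring, abs_neg, abs_of_nonneg (by linarith)]
        linarith)
      have hx2 : x + δ / 2 ∈ E := hball (by
        rw [Metric.mem_ball, Real.dist_eq,
          show x + δ / 2 - x = δ / 2 by ring, abs_of_nonneg (by linarith)]
        linarith)
      have h1 : A ≤ x - δ / 2 := csInf_le hbddA hx1
      have h2 : x + δ / 2 ≤ B := le_csSup hbddB hx2
      exact ⟨by linarith, by linarith⟩
    · intro x hx
      obtain ⟨u, hu, hux⟩ := exists_lt_of_csInf_lt hEne hx.1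
      obtain ⟨v, hv, hxv⟩ := exists_lt_of_lt_csSup hEne hx.2
      exact hEconn.isPreconnected.ordConnected.out hu hv ⟨hux.le, hxv.le⟩
  have hAmem : θ₀ ≤ A := le_csInf hEne fun x hx => (hEsub hx).1.le
  have hBmem : B ≤ θ₀ + 2 * π := csSup_le hEne fun x hx => (hEsub hx).2.le
  have hAB : A < B := by
    obtain ⟨x, hx⟩ := hEne
    rw [hEIoo] at hx
    linarith [hx.1, hx.2]
  have hsarc : s = arc A B := by rw [hsE, hEIoo]; rfl
  have hBA : B < A + 2 * π := by
    by_contra hcon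
    push_neg at hcon
    have hAθ : A = θ₀ := le_antisymm (by linarith) hAmem
    apply hc
    rw [← hexpθ₀, ← hAθ, hsarc]
    exact cexp_left_mem_closure hAB
  have hdisj : interior sᶜ ∩ closure s = ∅ := by
    have h1 : interior sᶜ ∩ s = ∅ := by
      rw [Set.eq_empty_iff_forall_notMem]
      rintro x ⟨h1, h2⟩
      exact interior_subset h1 h2
    have h2 := (isOpen_interior (s := sᶜ)).inter_closure (t := s)
    rw [h1, closure_empty] at h2
    exact Set.eq_empty_iff_forall_notMem.mpr fun x hx => h2 hx
  have hkey : intCompl s = arc B (A + 2 * π) := by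
    apply Set.Subset.antisymm
    · intro w hw
      obtain ⟨t, htmem, hwt⟩ := cexp_surj_Ico A w
      have hwc : w ∈ sᶜ := interior_subset hw
      rcases eq_or_lt_of_le htmem.1 with hAt | hAt
      · exfalso
        have hwA : w = Circle.exp A := by rw [← hwt, ← hAt]
        have : w ∈ closure s := by
          rw [hsarc, hwA]; exact cexp_left_mem_closure hAB
        exact Set.eq_empty_iff_forall_notMem.mp hdisj w ⟨hw, this⟩
      · rcases lt_trichotomy t B with htB | htB | htB
        · exfalso
          apply hwc
          rw [hsarc, ← hwt]
          exact mem_arc ⟨hAt, htB⟩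
        · exfalso
          have : w ∈ closure s := by
            rw [hsarc, ← hwt, htB]; exact cexp_right_mem_closure hAB
          exact Set.eq_empty_iff_forall_notMem.mp hdisj w ⟨hw, this⟩
        · rw [← hwt]
          exact mem_arc ⟨htB, htmem.2⟩
    · apply interior_maximal ?_ (isOpen_arc _ _)
      rintro w ⟨t, ht, rfl⟩
      intro hws
      rw [hsarc] at hws
      obtain ⟨t', ht', heq⟩ := hws
      exact cexp_ne (x := t) (y := t')
        (by linarith [ht.1, ht'.2]) (by linarith [ht.2, ht'.1]) heq.symm
  rw [hkey]
  exact isInterval_arc (by linarith) (by linarith)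

/-- Around any two distinct points of the circle, inside any two given open
neighborhoods, there is a pair of disjoint intervals. -/
private lemma exists_goodPair_subset {U₁ U₂ : Set Circle} (h1 : IsOpen U₁) (h2 : IsOpen U₂)
    {x : Circle × Circle} (hx : x.1 ≠ x.2) (hx1 : x.1 ∈ U₁) (hx2 : x.2 ∈ U₂) :
    ∃ P : CPair, GoodPair P ∧ memPair x P ∧ P.1 ⊆ U₁ ∧ P.2 ⊆ U₂ := by
  obtain ⟨W₁, W₂, hW1, hW2, hxW1, hxW2, hWd⟩ := t2_separation hx
  obtain ⟨V₁, hV1, hxV1, hV1s⟩ := exists_interval_subset (h1.inter hW1) ⟨hx1, hxW1⟩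
  obtain ⟨V₂, hV2, hxV2, hV2s⟩ := exists_interval_subset (h2.inter hW2) ⟨hx2, hxW2⟩
  refine ⟨(V₁, V₂), ⟨hV1, hV2, ?_⟩, ⟨hxV1, hxV2⟩, ?_, ?_⟩
  · exact hWd.mono (hV1s.trans Set.inter_subset_right) (hV2s.trans Set.inter_subset_right)
  · exact hV1s.trans Set.inter_subset_left
  · exact hV2s.trans Set.inter_subset_left

end CNet

/-! ## Algebra of fusion systems -/

namespace CNet
open Real Set

section Fusion

variable {H0 : Type*} [NormedAddCommGroup H0] [InnerProductSpace ℂ H0] [CompleteSpace H0]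
  {𝒜 : ConformalNet H0}
  {H K : Type*} [NormedAddCommGroup H] [InnerProductSpace ℂ H] [CompleteSpace H]
  [NormedAddCommGroup K] [InnerProductSpace ℂ K] [CompleteSpace K]
  {ρH : NetRep 𝒜 H} {ρK : NetRep 𝒜 K}

private lemma bdd_mono {L : Type*} [NormedAddCommGroup L] [InnerProductSpace ℂ L]
    [CompleteSpace L] (ρ : NetRep 𝒜 L) {I I' : Set Circle} (hI : IsInterval I)
    (hI' : IsInterval I') (hII : I ⊆ I') : ρ.bdd I ⊆ ρ.bdd I' := by
  rintro ξ ⟨T, hT, rfl⟩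
  refine ⟨T, ?_, rfl⟩
  intro x hx
  have hsub : intCompl I' ⊆ intCompl I := interior_mono (Set.compl_subset_compl.mpr hII)
  have hxI : x ∈ 𝒜.A (intCompl I) :=
    𝒜.isotony (isInterval_intCompl hI') (isInterval_intCompl hI) hsub hx
  have h2 := hT hxI
  rwa [ρ.compat (isInterval_intCompl hI') (isInterval_intCompl hI) hsub hx] at h2

private lemma fusion_ext {S : FusionSystem 𝒜 ρH ρK} {P : CPair} (hP : GoodPair P)
    {W : Type*} [NormedAddCommGroup W] [InnerProductSpace ℂ W] [CompleteSpace W]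
    (V V' : (S.F P).V ≃ₗᵢ[ℂ] W)
    (h : ∀ ξ ∈ ρH.bdd P.1, ∀ η ∈ ρK.bdd P.2, V (S.u P ξ η) = V' (S.u P ξ η)) :
    V = V' := by
  have hdense := (S.isFusion hP).dense_span
  have hfun : (V : (S.F P).V → W) = (V' : (S.F P).V → W) := by
    apply Continuous.ext_on hdense V.continuous V'.continuous
    intro w hw
    induction hw using Submodule.span_induction with
    | mem x hx =>
      obtain ⟨ξ, hξ, η, hη, rfl⟩ := hx
      exact h ξ hξ η hη
    | zero => simp
    | add x y hx hy ihx ihy => simp [map_add, ihx, ihy]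
    | smul a x hx ih => simp [map_smul, ih]
  exact LinearIsometryEquiv.ext fun x => congrFun hfun x

private lemma subPair_trans {P Q R : CPair} (h1 : subPair P Q) (h2 : subPair Q R) :
    subPair P R := ⟨h1.1.trans h2.1, h1.2.trans h2.2⟩

private lemma li_cancel {X Y Z W : Type*} [NormedAddCommGroup X] [InnerProductSpace ℂ X]
    [NormedAddCommGroup Y] [InnerProductSpace ℂ Y] [NormedAddCommGroup Z]
    [InnerProductSpace ℂ Z] [NormedAddCommGroup W] [InnerProductSpace ℂ W]
    (e : X ≃ₗᵢ[ℂ] Y) (f : Y ≃ₗᵢ[ℂ] Z) (g : Y ≃ₗᵢ[ℂ] W) :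
    ((e.trans f).symm.trans (e.trans g)) = f.symm.trans g := by
  apply LinearIsometryEquiv.ext
  intro x
  simp [LinearIsometryEquiv.trans_apply, LinearIsometryEquiv.symm_trans]

private lemma li_cancel2 {X Y Z W : Type*} [NormedAddCommGroup X] [InnerProductSpace ℂ X]
    [NormedAddCommGroup Y] [InnerProductSpace ℂ Y] [NormedAddCommGroup Z]
    [InnerProductSpace ℂ Z] [NormedAddCommGroup W] [InnerProductSpace ℂ W]
    (x : Y ≃ₗᵢ[ℂ] X) (y : Y ≃ₗᵢ[ℂ] Z) (z : Y ≃ₗᵢ[ℂ] W) :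
    (x.symm.trans y).trans (y.symm.trans z) = x.symm.trans z := by
  apply LinearIsometryEquiv.ext
  intro v
  simp [LinearIsometryEquiv.trans_apply]

private lemma incl_cocycle {S : FusionSystem 𝒜 ρH ρK} {A B C : CPair}
    (hA : GoodPair A) (hB : GoodPair B) (hC : GoodPair C)
    (hAB : subPair A B) (hBC : subPair B C) :
    S.incl (subPair_trans hAB hBC) = (S.incl hAB).trans (S.incl hBC) := by
  apply fusion_ext hA
  intro ξ hξ η hη
  rw [LinearIsometryEquiv.trans_apply,
      S.incl_spec _ hA hC ξ hξ η hη,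
      S.incl_spec hAB hA hB ξ hξ η hη,
      S.incl_spec hBC hB hC ξ (bdd_mono ρH hA.1 hB.1 hAB.1 hξ)
        η (bdd_mono ρK hA.2.1 hB.2.1 hAB.2 hη)]

/-- `C` is a canonical connecting map `H(P) ⊠ K(P) → H(R) ⊠ K(R)` at the
configuration `a`. -/
private def IsConn (S : FusionSystem 𝒜 ρH ρK) (a : Circle × Circle) (P R : CPair)
    (C : (S.F P).V ≃ₗᵢ[ℂ] (S.F R).V) : Prop :=
  ∃ A : CPair, GoodPair A ∧ memPair a A ∧ ∃ (hAP : subPair A P) (hAR : subPair A R),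
    C = (S.incl hAP).symm.trans (S.incl hAR)

private lemma isConn_exists (S : FusionSystem 𝒜 ρH ρK) {a : Circle × Circle}
    (hane : a.1 ≠ a.2) {P R : CPair} (hP : GoodPair P) (hR : GoodPair R)
    (haP : memPair a P) (haR : memPair a R) : ∃ C, IsConn S a P R C := by
  obtain ⟨A, hA, haA, g1, g2⟩ := exists_goodPair_subset (hP.1.1.inter hR.1.1)
    (hP.2.1.1.inter hR.2.1.1) hane ⟨haP.1, haR.1⟩ ⟨haP.2, haR.2⟩
  exact ⟨_, A, hA, haA,
    ⟨g1.trans Set.inter_subset_left, g2.trans Set.inter_subset_left⟩,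
    ⟨g1.trans Set.inter_subset_right, g2.trans Set.inter_subset_right⟩, rfl⟩

private lemma isConn_reduce {S : FusionSystem 𝒜 ρH ρK}
    {P R : CPair} (hP : GoodPair P) (hR : GoodPair R) {A G : CPair}
    (hA : GoodPair A) (hG : GoodPair G) (hGA : subPair G A)
    (hAP : subPair A P) (hAR : subPair A R) :
    (S.incl hAP).symm.trans (S.incl hAR)
      = (S.incl (subPair_trans hGA hAP)).symm.trans (S.incl (subPair_trans hGA hAR)) := by
  rw [incl_cocycle hG hA hP hGA hAP, incl_cocycle hG hA hR hGA hAR, li_cancel]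

private lemma isConn_unique {S : FusionSystem 𝒜 ρH ρK} {a : Circle × Circle}
    (hane : a.1 ≠ a.2) {P R : CPair} (hP : GoodPair P) (hR : GoodPair R)
    {C C' : (S.F P).V ≃ₗᵢ[ℂ] (S.F R).V}
    (h : IsConn S a P R C) (h' : IsConn S a P R C') : C = C' := by
  obtain ⟨A, hA, haA, hAP, hAR, rfl⟩ := h
  obtain ⟨B, hB, haB, hBP, hBR, rfl⟩ := h'
  obtain ⟨G, hG, haG, g1, g2⟩ := exists_goodPair_subset (hA.1.1.inter hB.1.1)
    (hA.2.1.1.inter hB.2.1.1) hane ⟨haA.1, haB.1⟩ ⟨haA.2, haB.2⟩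
  have hGA : subPair G A := ⟨g1.trans Set.inter_subset_left, g2.trans Set.inter_subset_left⟩
  have hGB : subPair G B := ⟨g1.trans Set.inter_subset_right, g2.trans Set.inter_subset_right⟩
  rw [isConn_reduce hP hR hA hG hGA hAP hAR, isConn_reduce hP hR hB hG hGB hBP hBR]

private lemma isConn_refl (S : FusionSystem 𝒜 ρH ρK) {a : Circle × Circle}
    (hane : a.1 ≠ a.2) {P : CPair} (hP : GoodPair P) (haP : memPair a P) :
    IsConn S a P P (LinearIsometryEquiv.refl ℂ (S.F P).V) := by
  obtain ⟨A, hA, haA, g1, g2⟩ := exists_goodPair_subset hP.1.1 hP.2.1.1 hane haP.1 haP.2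
  exact ⟨A, hA, haA, ⟨g1, g2⟩, ⟨g1, g2⟩, (LinearIsometryEquiv.symm_trans_self _).symm⟩

private lemma isConn_symm {S : FusionSystem 𝒜 ρH ρK} {a : Circle × Circle}
    {P R : CPair} {C : (S.F P).V ≃ₗᵢ[ℂ] (S.F R).V} (h : IsConn S a P R C) :
    IsConn S a R P C.symm := by
  obtain ⟨A, hA, haA, hAP, hAR, rfl⟩ := h
  refine ⟨A, hA, haA, hAR, hAP, ?_⟩
  apply LinearIsometryEquiv.ext
  intro x
  simp [LinearIsometryEquiv.trans_apply, LinearIsometryEquiv.symm_trans]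

private lemma isConn_trans {S : FusionSystem 𝒜 ρH ρK} {a : Circle × Circle}
    (hane : a.1 ≠ a.2) {P Q R : CPair} (hP : GoodPair P) (hQ : GoodPair Q) (hR : GoodPair R)
    {C : (S.F P).V ≃ₗᵢ[ℂ] (S.F Q).V} {D : (S.F Q).V ≃ₗᵢ[ℂ] (S.F R).V}
    (h1 : IsConn S a P Q C) (h2 : IsConn S a Q R D) : IsConn S a P R (C.trans D) := by
  obtain ⟨A, hA, haA, hAP, hAQ, rfl⟩ := h1
  obtain ⟨B, hB, haB, hBQ, hBR, rfl⟩ := h2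
  obtain ⟨G, hG, haG, g1, g2⟩ := exists_goodPair_subset (hA.1.1.inter hB.1.1)
    (hA.2.1.1.inter hB.2.1.1) hane ⟨haA.1, haB.1⟩ ⟨haA.2, haB.2⟩
  have hGA : subPair G A := ⟨g1.trans Set.inter_subset_left, g2.trans Set.inter_subset_left⟩
  have hGB : subPair G B := ⟨g1.trans Set.inter_subset_right, g2.trans Set.inter_subset_right⟩
  refine ⟨G, hG, haG, subPair_trans hGA hAP, subPair_trans hGB hBR, ?_⟩
  rw [isConn_reduce hP hQ hA hG hGA hAP hAQ, isConn_reduce hQ hR hB hG hGB hBQ hBR,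
    li_cancel2]

end Fusion

end CNet

/-! ## Path continuations: structure lemmas -/

namespace CNet
open Real Set

section PC

variable {H0 : Type*} [NormedAddCommGroup H0] [InnerProductSpace ℂ H0] [CompleteSpace H0]
  {𝒜 : ConformalNet H0}
  {H K : Type*} [NormedAddCommGroup H] [InnerProductSpace ℂ H] [CompleteSpace H]
  [NormedAddCommGroup K] [InnerProductSpace ℂ K] [CompleteSpace K]
  {ρH : NetRep 𝒜 H} {ρK : NetRep 𝒜 K}

private lemma pc2_le {S : PairSystem} {a₀ a₁ : Conf2} {γ : Path a₀ a₁}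
    {s t : unitInterval} {P Q : CPair} {V : (S.F P).V ≃ₗᵢ[ℂ] (S.F Q).V}
    (h : PathCont2 S γ s t P Q V) : s ≤ t := by
  induction h with
  | basic s t hst P Q R P' Q' hP hQ hR hP' hQ' hsP' htQ' hP'P hP'R hQ'Q hQ'R hcov => exact hst
  | trans h1 h2 ih1 ih2 => exact ih1.trans ih2

private lemma pc2_good {S : PairSystem} {a₀ a₁ : Conf2} {γ : Path a₀ a₁}
    {s t : unitInterval} {P Q : CPair} {V : (S.F P).V ≃ₗᵢ[ℂ] (S.F Q).V}
    (h : PathCont2 S γ s t P Q V) : GoodPair P ∧ GoodPair Q := by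
  induction h with
  | basic s t hst P Q R P' Q' hP hQ hR hP' hQ' hsP' htQ' hP'P hP'R hQ'Q hQ'R hcov =>
    exact ⟨hP, hQ⟩
  | trans h1 h2 ih1 ih2 => exact ⟨ih1.1, ih2.2⟩

private lemma pc2_mem {S : PairSystem} {a₀ a₁ : Conf2} {γ : Path a₀ a₁}
    {s t : unitInterval} {P Q : CPair} {V : (S.F P).V ≃ₗᵢ[ℂ] (S.F Q).V}
    (h : PathCont2 S γ s t P Q V) :
    memPair (γ s).val P ∧ memPair (γ t).val Q := by
  induction h with
  | basic s t hst P Q R P' Q' hP hQ hR hP' hQ' hsP' htQ' hP'P hP'R hQ'Q hQ'R hcov =>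
    exact ⟨⟨hP'P.1 hsP'.1, hP'P.2 hsP'.2⟩, ⟨hQ'Q.1 htQ'.1, hQ'Q.2 htQ'.2⟩⟩
  | trans h1 h2 ih1 ih2 => exact ⟨ih1.1, ih2.2⟩

/-- A basic path continuation built from two connecting maps. -/
private lemma pc2_of_conns {S : FusionSystem 𝒜 ρH ρK} {a₀ a₁ : Conf2} {γ : Path a₀ a₁}
    {s t : unitInterval} (hst : s ≤ t) {P Q R : CPair}
    (hP : GoodPair P) (hQ : GoodPair Q) (hR : GoodPair R)
    (hcov : ∀ r : unitInterval, s ≤ r → r ≤ t → memPair (γ r).val R)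
    {C₁ : (S.F P).V ≃ₗᵢ[ℂ] (S.F R).V} {C₂ : (S.F R).V ≃ₗᵢ[ℂ] (S.F Q).V}
    (h1 : IsConn S (γ s).val P R C₁) (h2 : IsConn S (γ t).val R Q C₂) :
    PathCont2 S.toPairSystem γ s t P Q (C₁.trans C₂) := by
  obtain ⟨A, hA, haA, hAP, hAR, rfl⟩ := h1
  obtain ⟨B, hB, haB, hBR, hBQ, rfl⟩ := h2
  exact PathCont2.basic s t hst P Q R A B hP hQ hR hA hB haA haB hAP hAR hBQ hBR hcov

/-- Connecting maps between two pairs covering a piece of path are independent of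
the base point (local constancy + connectedness). -/
private lemma isConn_const {S : FusionSystem 𝒜 ρH ρK} {a₀ a₁ : Conf2} {γ : Path a₀ a₁}
    {s t : unitInterval} (hst : s ≤ t) {R R' : CPair} (hR : GoodPair R) (hR' : GoodPair R')
    (hcov : ∀ r : unitInterval, s ≤ r → r ≤ t → memPair (γ r).val R)
    (hcov' : ∀ r : unitInterval, s ≤ r → r ≤ t → memPair (γ r).val R')
    {C C' : (S.F R).V ≃ₗᵢ[ℂ] (S.F R').V}
    (h : IsConn S (γ s).val R R' C) (h' : IsConn S (γ t).val R R' C') : C = C' := by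
  classical
  have hopen : ∀ A : CPair, GoodPair A → ∃ O : Set ℝ, IsOpen O ∧
      ∀ x (hx : x ∈ Set.Icc (0:ℝ) 1), (x ∈ O ↔ memPair (γ ⟨x, hx⟩).val A) := by
    intro A hA
    have hcont : Continuous fun r : unitInterval => ((γ r).val : Circle × Circle) :=
      continuous_subtype_val.comp γ.continuous
    have hOp : IsOpen {r : unitInterval | memPair (γ r).val A} := by
      have heq : {r : unitInterval | memPair (γ r).val A}
          = (fun r : unitInterval => (γ r).val) ⁻¹' (A.1 ×ˢ A.2) := rfl
      rw [heq]
      exact (hA.1.1.prod hA.2.1.1).preimage hcont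
    obtain ⟨O, hO, hOeq⟩ := isOpen_induced_iff.mp hOp
    refine ⟨O, hO, fun x hx => ?_⟩
    constructor
    · intro hxO
      have hmem : (⟨x, hx⟩ : unitInterval) ∈ Subtype.val ⁻¹' O := hxO
      rw [hOeq] at hmem; exact hmem
    · intro hmem
      have hmem' : (⟨x, hx⟩ : unitInterval) ∈ {r : unitInterval | memPair (γ r).val A} := hmem
      rw [← hOeq] at hmem'; exact hmem'
  set T : Set ℝ := Set.Icc ((s : ℝ)) ((t : ℝ)) with hT
  have hTsub : T ⊆ Set.Icc (0:ℝ) 1 := fun x hx => ⟨s.2.1.trans hx.1, hx.2.trans t.2.2⟩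
  set u : Set ℝ := ⋃₀ {O | IsOpen O ∧ ∀ x ∈ O, ∀ (hx : x ∈ Set.Icc (0:ℝ) 1),
    IsConn S (γ ⟨x, hx⟩).val R R' C} with hu
  set v : Set ℝ := ⋃₀ {O | IsOpen O ∧ ∀ x ∈ O, ∀ (hx : x ∈ Set.Icc (0:ℝ) 1),
    ∃ D, IsConn S (γ ⟨x, hx⟩).val R R' D ∧ D ≠ C} with hv
  have hu_open : IsOpen u := isOpen_sUnion fun O hO => hO.1
  have hv_open : IsOpen v := isOpen_sUnion fun O hO => hO.1
  have hcover : T ⊆ u ∪ v := by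
    intro x hx
    have hx01 : x ∈ Set.Icc (0:ℝ) 1 := hTsub hx
    have hsr : s ≤ (⟨x, hx01⟩ : unitInterval) := Subtype.coe_le_coe.mp hx.1
    have hrt : (⟨x, hx01⟩ : unitInterval) ≤ t := Subtype.coe_le_coe.mp hx.2
    obtain ⟨D, hD⟩ := isConn_exists S (γ ⟨x, hx01⟩).property hR hR'
      (hcov _ hsr hrt) (hcov' _ hsr hrt)
    obtain ⟨A, hA, haA, hAR, hAR', hDdef⟩ := hD
    obtain ⟨O, hO, hOiff⟩ := hopen A hA
    by_cases hDC : D = C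
    · exact Or.inl ⟨O, ⟨hO, fun y hy hy01 =>
        hDC ▸ (⟨A, hA, (hOiff y hy01).mp hy, hAR, hAR', hDdef⟩ :
          IsConn S (γ ⟨y, hy01⟩).val R R' D)⟩, (hOiff x hx01).mpr haA⟩
    · exact Or.inr ⟨O, ⟨hO, fun y hy hy01 =>
        ⟨D, ⟨A, hA, (hOiff y hy01).mp hy, hAR, hAR', hDdef⟩, hDC⟩⟩, (hOiff x hx01).mpr haA⟩
  have hsT : (s : ℝ) ∈ T := ⟨le_refl _, Subtype.coe_le_coe.mpr hst⟩
  have htT : (t : ℝ) ∈ T := ⟨Subtype.coe_le_coe.mpr hst, le_refl _⟩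
  have hsu : (s : ℝ) ∈ u := by
    obtain ⟨A, hA, haA, hAR, hAR', hCdef⟩ := h
    obtain ⟨O, hO, hOiff⟩ := hopen A hA
    exact ⟨O, ⟨hO, fun y hy hy01 => ⟨A, hA, (hOiff y hy01).mp hy, hAR, hAR', hCdef⟩⟩,
      (hOiff (s : ℝ) s.2).mpr haA⟩
  have hTv : ¬ (T ∩ v).Nonempty := by
    rintro ⟨x, hxT, hxv⟩
    obtain ⟨y, hyT, hyu, hyv⟩ := isPreconnected_Icc (a := (s:ℝ)) (b := (t:ℝ)) u v
      hu_open hv_open hcover ⟨(s:ℝ), hsT, hsu⟩ ⟨x, hxT, hxv⟩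
    obtain ⟨O1, hO1, hyO1⟩ := hyu
    obtain ⟨O2, hO2, hyO2⟩ := hyv
    have hy01 : y ∈ Set.Icc (0:ℝ) 1 := hTsub hyT
    have hC := hO1.2 y hyO1 hy01
    obtain ⟨D, hD, hDne⟩ := hO2.2 y hyO2 hy01
    exact hDne (isConn_unique (γ ⟨y, hy01⟩).property hR hR' hD hC)
  have htu : (t : ℝ) ∈ u := by
    rcases hcover htT with hmem | hmem
    · exact hmem
    · exact absurd ⟨(t : ℝ), htT, hmem⟩ hTv
  obtain ⟨O, hO, htO⟩ := htu
  have hCt : IsConn S (γ ⟨(t : ℝ), t.2⟩).val R R' C := hO.2 (t : ℝ) htO t.2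
  exact (isConn_unique (γ t).property hR hR' hCt h')

end PC

end CNet

/-! ## Uniqueness of path continuations -/

namespace CNet
open Real Set

section LU

variable {H0 : Type*} [NormedAddCommGroup H0] [InnerProductSpace ℂ H0] [CompleteSpace H0]
  {𝒜 : ConformalNet H0}
  {H K : Type*} [NormedAddCommGroup H] [InnerProductSpace ℂ H] [CompleteSpace H]
  [NormedAddCommGroup K] [InnerProductSpace ℂ K] [CompleteSpace K]
  {ρH : NetRep 𝒜 H} {ρK : NetRep 𝒜 K}

private lemma lu_basic {S : FusionSystem 𝒜 ρH ρK} {a₀ a₁ : Conf2} {γ : Path a₀ a₁}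
    {s t : unitInterval} {Pt Qt : CPair} {Vt : (S.F Pt).V ≃ₗᵢ[ℂ] (S.F Qt).V}
    (hD' : PathCont2 S.toPairSystem γ s t Pt Qt Vt) :
    ∀ (P Q R : CPair), GoodPair P → GoodPair Q → GoodPair R →
    (∀ r : unitInterval, s ≤ r → r ≤ t → memPair (γ r).val R) →
    ∀ (C₁ : (S.F P).V ≃ₗᵢ[ℂ] (S.F R).V) (C₂ : (S.F R).V ≃ₗᵢ[ℂ] (S.F Q).V),
    IsConn S (γ s).val P R C₁ → IsConn S (γ t).val R Q C₂ →
    ∀ (Cp : (S.F P).V ≃ₗᵢ[ℂ] (S.F Pt).V) (Cq : (S.F Q).V ≃ₗᵢ[ℂ] (S.F Qt).V),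
    IsConn S (γ s).val P Pt Cp → IsConn S (γ t).val Q Qt Cq →
    (C₁.trans C₂).trans Cq = Cp.trans Vt := by
  induction hD' with
  | basic s t hst Pb Qb Rb P' Q' hPb hQb hRb hP' hQ' hsP' htQ' hP'P hP'R hQ'Q hQ'R hcovb =>
    intro P Q R hP hQ hR hcov C₁ C₂ hC₁ hC₂ Cp Cq hCp hCq
    have hCt1 : IsConn S (γ s).val Pb Rb ((S.incl hP'P).symm.trans (S.incl hP'R)) :=
      ⟨P', hP', hsP', hP'P, hP'R, rfl⟩
    have hCt2 : IsConn S (γ t).val Rb Qb ((S.incl hQ'R).symm.trans (S.incl hQ'Q)) :=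
      ⟨Q', hQ', htQ', hQ'R, hQ'Q, rfl⟩
    have hanes : (γ s).val.1 ≠ (γ s).val.2 := (γ s).property
    have hanet : (γ t).val.1 ≠ (γ t).val.2 := (γ t).property
    have hmRs : memPair (γ s).val R := hcov s le_rfl hst
    have hmRt : memPair (γ t).val R := hcov t hst le_rfl
    have hmRbs : memPair (γ s).val Rb := hcovb s le_rfl hst
    have hmRbt : memPair (γ t).val Rb := hcovb t hst le_rfl
    obtain ⟨K₁, hK₁⟩ := isConn_exists S hanes hR hRb hmRs hmRbs
    obtain ⟨K₂, hK₂⟩ := isConn_exists S hanet hR hRb hmRt hmRbt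
    have hKK : K₁ = K₂ := isConn_const hst hR hRb hcov hcovb hK₁ hK₂
    have e1 : C₂.trans Cq = K₂.trans ((S.incl hQ'R).symm.trans (S.incl hQ'Q)) :=
      isConn_unique hanet hR hQb
        (isConn_trans hanet hR hQ hQb hC₂ hCq)
        (isConn_trans hanet hR hRb hQb hK₂ hCt2)
    have e2 : C₁.trans K₁ = Cp.trans ((S.incl hP'P).symm.trans (S.incl hP'R)) :=
      isConn_unique hanes hP hRb
        (isConn_trans hanes hP hR hRb hC₁ hK₁)
        (isConn_trans hanes hP hPb hRb hCp hCt1)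
    calc (C₁.trans C₂).trans Cq
        = C₁.trans (C₂.trans Cq) := (LinearIsometryEquiv.trans_assoc _ _ _).symm
      _ = C₁.trans (K₁.trans ((S.incl hQ'R).symm.trans (S.incl hQ'Q))) := by rw [e1, hKK]
      _ = (C₁.trans K₁).trans ((S.incl hQ'R).symm.trans (S.incl hQ'Q)) :=
          LinearIsometryEquiv.trans_assoc _ _ _
      _ = (Cp.trans ((S.incl hP'P).symm.trans (S.incl hP'R))).trans
            ((S.incl hQ'R).symm.trans (S.incl hQ'Q)) := by rw [e2]
      _ = Cp.trans (((S.incl hP'P).symm.trans (S.incl hP'R)).trans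
            ((S.incl hQ'R).symm.trans (S.incl hQ'Q))) := (LinearIsometryEquiv.trans_assoc _ _ _).symm
  | @trans s m t Pb Jb Qb V₁ V₂ h1 h2 ih1 ih2 =>
    intro P Q R hP hQ hR hcov C₁ C₂ hC₁ hC₂ Cp Cq hCp hCq
    have hsm : s ≤ m := pc2_le h1
    have hmt : m ≤ t := pc2_le h2
    have hJb : GoodPair Jb := (pc2_good h1).2
    have hmJb : memPair (γ m).val Jb := (pc2_mem h1).2
    have hanem : (γ m).val.1 ≠ (γ m).val.2 := (γ m).property
    have hmRm : memPair (γ m).val R := hcov m hsm hmt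
    have hrefl : IsConn S (γ m).val R R (LinearIsometryEquiv.refl ℂ (S.F R).V) :=
      isConn_refl S hanem hR hmRm
    obtain ⟨Cm, hCm⟩ := isConn_exists S hanem hR hJb hmRm hmJb
    have e1 := ih1 P R R hP hR hR (fun r h1' h2' => hcov r h1' (h2'.trans hmt))
      C₁ (LinearIsometryEquiv.refl ℂ (S.F R).V) hC₁ hrefl Cp Cm hCp hCm
    have e2 := ih2 R Q R hR hQ hR (fun r h1' h2' => hcov r (hsm.trans h1') h2')
      (LinearIsometryEquiv.refl ℂ (S.F R).V) C₂ hrefl hC₂ Cm Cq hCm hCq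
    have e1' : C₁.trans Cm = Cp.trans V₁ := by
      rw [← e1, LinearIsometryEquiv.trans_refl]
    have e2' : C₂.trans Cq = Cm.trans V₂ := by
      rw [← e2, LinearIsometryEquiv.refl_trans]
    calc (C₁.trans C₂).trans Cq
        = C₁.trans (C₂.trans Cq) := (LinearIsometryEquiv.trans_assoc _ _ _).symm
      _ = C₁.trans (Cm.trans V₂) := by rw [e2']
      _ = (C₁.trans Cm).trans V₂ := LinearIsometryEquiv.trans_assoc _ _ _
      _ = (Cp.trans V₁).trans V₂ := by rw [e1']
      _ = Cp.trans (V₁.trans V₂) := (LinearIsometryEquiv.trans_assoc _ _ _).symm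

private lemma pc2_split {S : FusionSystem 𝒜 ρH ρK} {a₀ a₁ : Conf2} {γ : Path a₀ a₁}
    {s t : unitInterval} {P Q : CPair} {V : (S.F P).V ≃ₗᵢ[ℂ] (S.F Q).V}
    (h : PathCont2 S.toPairSystem γ s t P Q V) :
    ∀ m : unitInterval, s ≤ m → m ≤ t →
    ∃ (M : CPair) (V₁ : (S.F P).V ≃ₗᵢ[ℂ] (S.F M).V) (V₂ : (S.F M).V ≃ₗᵢ[ℂ] (S.F Q).V),
      PathCont2 S.toPairSystem γ s m P M V₁ ∧ PathCont2 S.toPairSystem γ m t M Q V₂ ∧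
      V = V₁.trans V₂ := by
  induction h with
  | basic s t hst Pb Qb Rb P' Q' hPb hQb hRb hP' hQ' hsP' htQ' hP'P hP'R hQ'Q hQ'R hcov =>
    intro m hsm hmt
    have hmm : memPair (γ m).val Rb := hcov m hsm hmt
    have hanem : (γ m).val.1 ≠ (γ m).val.2 := (γ m).property
    obtain ⟨A, hA, haA, g1, g2⟩ := exists_goodPair_subset hRb.1.1 hRb.2.1.1 hanem hmm.1 hmm.2
    have hARb : subPair A Rb := ⟨g1, g2⟩
    refine ⟨Rb,
      ((S.incl hP'P).symm.trans (S.incl hP'R)).trans ((S.incl hARb).symm.trans (S.incl hARb)),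
      ((S.incl hARb).symm.trans (S.incl hARb)).trans ((S.incl hQ'R).symm.trans (S.incl hQ'Q)),
      ?_, ?_, ?_⟩
    · exact PathCont2.basic s m hsm Pb Rb Rb P' A hPb hRb hRb hP' hA hsP' haA hP'P hP'R
        hARb hARb (fun r h1 h2 => hcov r h1 (h2.trans hmt))
    · exact PathCont2.basic m t hmt Rb Qb Rb A Q' hRb hQb hRb hA hQ' haA htQ' hARb hARb
        hQ'Q hQ'R (fun r h1 h2 => hcov r (hsm.trans h1) h2)
    · apply LinearIsometryEquiv.ext
      intro x
      simp [LinearIsometryEquiv.trans_apply]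
  | @trans s mid t Pb Jb Qb V₁ V₂ h1 h2 ih1 ih2 =>
    intro m hsm hmt
    rcases le_total m mid with hmm | hmm
    · obtain ⟨M, W₁, W₂, hW₁, hW₂, hVeq⟩ := ih1 m hsm hmm
      refine ⟨M, W₁, W₂.trans V₂, hW₁, PathCont2.trans hW₂ h2, ?_⟩
      rw [hVeq, LinearIsometryEquiv.trans_assoc]
    · obtain ⟨M, W₁, W₂, hW₁, hW₂, hVeq⟩ := ih2 m hmm hmt
      refine ⟨M, V₁.trans W₁, W₂, PathCont2.trans h1 hW₁, hW₂, ?_⟩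
      rw [hVeq, LinearIsometryEquiv.trans_assoc]

private lemma lu {S : FusionSystem 𝒜 ρH ρK} {a₀ a₁ : Conf2} {γ : Path a₀ a₁}
    {s t : unitInterval} {P Q : CPair} {V : (S.F P).V ≃ₗᵢ[ℂ] (S.F Q).V}
    (hD : PathCont2 S.toPairSystem γ s t P Q V) :
    ∀ {P' Q' : CPair} {V' : (S.F P').V ≃ₗᵢ[ℂ] (S.F Q').V},
    PathCont2 S.toPairSystem γ s t P' Q' V' →
    ∀ (Cp : (S.F P).V ≃ₗᵢ[ℂ] (S.F P').V) (Cq : (S.F Q).V ≃ₗᵢ[ℂ] (S.F Q').V),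
    IsConn S (γ s).val P P' Cp → IsConn S (γ t).val Q Q' Cq →
    V.trans Cq = Cp.trans V' := by
  induction hD with
  | basic s t hst Pb Qb Rb P' Q' hPb hQb hRb hP' hQ' hsP' htQ' hP'P hP'R hQ'Q hQ'R hcov =>
    intro Pt Qt Vt hD' Cp Cq hCp hCq
    exact lu_basic hD' Pb Qb Rb hPb hQb hRb hcov _ _
      ⟨P', hP', hsP', hP'P, hP'R, rfl⟩ ⟨Q', hQ', htQ', hQ'R, hQ'Q, rfl⟩ Cp Cq hCp hCq
  | @trans s mid t Pb Jb Qb V₁ V₂ h1 h2 ih1 ih2 =>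
    intro Pt Qt Vt hD' Cp Cq hCp hCq
    obtain ⟨M', W₁, W₂, hW₁, hW₂, rfl⟩ := pc2_split hD' mid (pc2_le h1) (pc2_le h2)
    have hanem : (γ mid).val.1 ≠ (γ mid).val.2 := (γ mid).property
    obtain ⟨Cm, hCm⟩ := isConn_exists S hanem (pc2_good h1).2 (pc2_good hW₁).2
      (pc2_mem h1).2 (pc2_mem hW₁).2
    have e1 : V₁.trans Cm = Cp.trans W₁ := ih1 hW₁ Cp Cm hCp hCm
    have e2 : V₂.trans Cq = Cm.trans W₂ := ih2 hW₂ Cm Cq hCm hCq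
    calc (V₁.trans V₂).trans Cq
        = V₁.trans (V₂.trans Cq) := (LinearIsometryEquiv.trans_assoc _ _ _).symm
      _ = V₁.trans (Cm.trans W₂) := by rw [e2]
      _ = (V₁.trans Cm).trans W₂ := LinearIsometryEquiv.trans_assoc _ _ _
      _ = (Cp.trans W₁).trans W₂ := by rw [e1]
      _ = Cp.trans (W₁.trans W₂) := (LinearIsometryEquiv.trans_assoc _ _ _).symm

/-- Part 1: path continuations along a fixed path are unique. -/
private lemma pc2_unique {S : FusionSystem 𝒜 ρH ρK} {a₀ a₁ : Conf2} {γ : Path a₀ a₁}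
    {P Q : CPair} (hP : GoodPair P) (hQ : GoodPair Q)
    (ha₀ : memPair a₀.val P) (ha₁ : memPair a₁.val Q)
    {V V' : (S.F P).V ≃ₗᵢ[ℂ] (S.F Q).V}
    (h : IsPathCont2 S.toPairSystem γ P Q V) (h' : IsPathCont2 S.toPairSystem γ P Q V') :
    V = V' := by
  have h0 : γ 0 = a₀ := γ.source
  have h1 : γ 1 = a₁ := γ.target
  have hrefl0 : IsConn S (γ 0).val P P (LinearIsometryEquiv.refl ℂ (S.F P).V) :=
    isConn_refl S (γ 0).property hP (by rw [h0]; exact ha₀)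
  have hrefl1 : IsConn S (γ 1).val Q Q (LinearIsometryEquiv.refl ℂ (S.F Q).V) :=
    isConn_refl S (γ 1).property hQ (by rw [h1]; exact ha₁)
  have := lu h h' (LinearIsometryEquiv.refl ℂ (S.F P).V)
    (LinearIsometryEquiv.refl ℂ (S.F Q).V) hrefl0 hrefl1
  rwa [LinearIsometryEquiv.trans_refl, LinearIsometryEquiv.refl_trans] at this

end LU

end CNet

/-! ## Homotopy invariance -/

namespace CNet
open Real Set

section Homotopy

variable {H0 : Type*} [NormedAddCommGroup H0] [InnerProductSpace ℂ H0] [CompleteSpace H0]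
  {𝒜 : ConformalNet H0}
  {H K : Type*} [NormedAddCommGroup H] [InnerProductSpace ℂ H] [CompleteSpace H]
  [NormedAddCommGroup K] [InnerProductSpace ℂ K] [CompleteSpace K]
  {ρH : NetRep 𝒜 H} {ρK : NetRep 𝒜 K}

private lemma convex_aux {a b t : ℝ} (hab : a ≤ b) (h0 : 0 ≤ t) (h1 : t ≤ 1) :
    a ≤ (1 - t) * a + t * b ∧ (1 - t) * a + t * b ≤ b := by
  constructor <;> nlinarith

set_option maxHeartbeats 2000000 in
private lemma homotopy_invariant {S : FusionSystem 𝒜 ρH ρK} {a₀ a₁ : Conf2}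
    {γ γ' : Path a₀ a₁} (Fh : Path.Homotopy γ γ') {P Q : CPair}
    (hP : GoodPair P) (hQ : GoodPair Q) (ha₀ : memPair a₀.val P) (ha₁ : memPair a₁.val Q)
    {V V' : (S.F P).V ≃ₗᵢ[ℂ] (S.F Q).V}
    (h : IsPathCont2 S.toPairSystem γ P Q V) (h' : IsPathCont2 S.toPairSystem γ' P Q V') :
    V = V' := by
  classical
  have heval : ∀ (τ r : unitInterval), (Fh.eval τ) r = Fh (τ, r) := fun τ r =>
    Fh.toHomotopy.curry_apply τ r
  have hcov : ∀ p : unitInterval × unitInterval, ∃ R : CPair, GoodPair R ∧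
      IsOpen {q : unitInterval × unitInterval | memPair (Fh q).val R} ∧
      memPair (Fh p).val R := by
    intro p
    obtain ⟨R, hR, hmem, -, -⟩ := exists_goodPair_subset isOpen_univ isOpen_univ
      (Fh p).property (Set.mem_univ _) (Set.mem_univ _)
    refine ⟨R, hR, ?_, hmem⟩
    have heq : {q : unitInterval × unitInterval | memPair (Fh q).val R}
        = (fun q => (Fh q).val) ⁻¹' (R.1 ×ˢ R.2) := rfl
    rw [heq]
    exact (hR.1.1.prod hR.2.1.1).preimage (continuous_subtype_val.comp Fh.continuous)
  choose Rp hRp_good hRp_open hRp_mem using hcov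
  have hcover : (Set.univ : Set (unitInterval × unitInterval))
      ⊆ ⋃ p, {q | memPair (Fh q).val (Rp p)} :=
    fun q _ => Set.mem_iUnion.mpr ⟨q, hRp_mem q⟩
  obtain ⟨δ, hδ, hball⟩ := lebesgue_number_lemma_of_metric isCompact_univ hRp_open hcover
  obtain ⟨n, hn⟩ := exists_nat_one_div_lt hδ
  set N : ℝ := (n : ℝ) + 1 with hN
  have hN0 : (0:ℝ) < N := by positivity
  have hn' : 1 / N < δ := hn
  set ut : ℝ → unitInterval := fun x => Set.projIcc (0:ℝ) 1 zero_le_one x with hut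
  have hut_coe : ∀ x : ℝ, 0 ≤ x → x ≤ 1 → ((ut x : unitInterval) : ℝ) = x := by
    intro x h0 h1
    rw [hut]
    simp only []
    rw [Set.projIcc_of_mem zero_le_one ⟨h0, h1⟩]
  have hnode : ∀ j : ℕ, j ≤ n + 1 → ((ut ((j:ℝ)/N) : unitInterval) : ℝ) = (j:ℝ)/N := by
    intro j hj
    refine hut_coe _ (by positivity) ?_
    rw [div_le_one hN0, hN]
    exact_mod_cast hj
  have hnode0 : ut (((0:ℕ):ℝ)/N) = 0 := by
    apply Subtype.ext
    rw [hnode 0 (Nat.zero_le _)]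
    simp
  have hnodeN : ut ((((n+1):ℕ):ℝ)/N) = 1 := by
    apply Subtype.ext
    rw [hnode (n+1) le_rfl,
      show ((((n+1):ℕ)):ℝ) = N from by rw [hN]; push_cast; ring,
      div_self hN0.ne']
    simp
  have hsq : ∀ i j : ℕ, (i:ℝ)/N ≤ 1 → (j:ℝ)/N ≤ 1 → ∃ R : CPair, GoodPair R ∧
      ∀ p : unitInterval × unitInterval,
        |((p.1 : ℝ)) - (i:ℝ)/N| ≤ 1/N → |((p.2 : ℝ)) - (j:ℝ)/N| ≤ 1/N →
        memPair (Fh p).val R := by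
    intro i j hiN hjN
    obtain ⟨q, hq⟩ := hball (ut ((i:ℝ)/N), ut ((j:ℝ)/N)) (Set.mem_univ _)
    refine ⟨Rp q, hRp_good q, ?_⟩
    intro p h1 h2
    apply hq
    rw [Metric.mem_ball, Prod.dist_eq]
    apply max_lt
    · rw [Subtype.dist_eq, Real.dist_eq, hut_coe _ (by positivity) hiN]
      exact lt_of_le_of_lt h1 hn'
    · rw [Subtype.dist_eq, Real.dist_eq, hut_coe _ (by positivity) hjN]
      exact lt_of_le_of_lt h2 hn'
  choose! Rsq hRsq_good hRsq_mem using hsq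
  -- the band lemma
  have hband : ∀ i : ℕ, i ≤ n → ∀ σ σ' : unitInterval,
      (i:ℝ)/N ≤ (σ:ℝ) → (σ:ℝ) ≤ (σ':ℝ) → ((σ':ℝ)) ≤ ((i:ℝ)+1)/N →
      ∃ W : (S.F P).V ≃ₗᵢ[ℂ] (S.F Q).V,
        IsPathCont2 S.toPairSystem (Fh.eval σ) P Q W ∧
        IsPathCont2 S.toPairSystem (Fh.eval σ') P Q W := by
    intro i hi σ σ' hiσ hσσ' hσ'i
    have hiN : (i:ℝ)/N ≤ 1 := by
      rw [div_le_one hN0, hN]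
      have : (i:ℝ) ≤ (n:ℝ) := by exact_mod_cast hi
      linarith
    have hsqm : ∀ j : ℕ, j ≤ n → ∀ (τ r : unitInterval), (σ:ℝ) ≤ (τ:ℝ) → (τ:ℝ) ≤ (σ':ℝ) →
        (j:ℝ)/N ≤ (r:ℝ) → (r:ℝ) ≤ ((j:ℝ)+1)/N → memPair (Fh (τ, r)).val (Rsq i j) := by
      intro j hj τ r h1 h2 h3 h4
      have hjN : (j:ℝ)/N ≤ 1 := by
        rw [div_le_one hN0, hN]
        have : (j:ℝ) ≤ (n:ℝ) := by exact_mod_cast hj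
        linarith
      refine hRsq_mem i j hiN hjN (τ, r) ?_ ?_
      · have e : ((i:ℝ)+1)/N = (i:ℝ)/N + 1/N := by ring
        rw [abs_le]
        constructor <;> [linarith; linarith]
      · have e : ((j:ℝ)+1)/N = (j:ℝ)/N + 1/N := by ring
        rw [abs_le]
        constructor <;> [linarith; linarith]
    have hstep : ∀ j : ℕ, j ≤ n + 1 → ∃ (M : CPair) (W : (S.F P).V ≃ₗᵢ[ℂ] (S.F M).V),
        GoodPair M ∧
        (∀ τ : unitInterval, (σ:ℝ) ≤ (τ:ℝ) → (τ:ℝ) ≤ (σ':ℝ) →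
          memPair (Fh (τ, ut ((j:ℝ)/N))).val M) ∧
        PathCont2 S.toPairSystem (Fh.eval σ) 0 (ut ((j:ℝ)/N)) P M W ∧
        PathCont2 S.toPairSystem (Fh.eval σ') 0 (ut ((j:ℝ)/N)) P M W := by
      intro j
      induction j with
      | zero =>
        intro _
        rw [hnode0]
        have hvert : ∀ τ : unitInterval, (σ:ℝ) ≤ (τ:ℝ) → (τ:ℝ) ≤ (σ':ℝ) →
            memPair (Fh (τ, (0:unitInterval))).val P := by
          intro τ _ _
          have hae : Fh (τ, (0:unitInterval)) = a₀ := by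
            rw [← heval τ 0]
            exact (Fh.eval τ).source
          rw [hae]
          exact ha₀
        have hrefl : ∀ ρ : unitInterval, (σ:ℝ) ≤ (ρ:ℝ) → (ρ:ℝ) ≤ (σ':ℝ) →
            PathCont2 S.toPairSystem (Fh.eval ρ) 0 0 P P
              ((LinearIsometryEquiv.refl ℂ (S.F P).V).trans
                (LinearIsometryEquiv.refl ℂ (S.F P).V)) := by
          intro ρ h1 h2
          have hm : memPair ((Fh.eval ρ) 0).val P := by
            rw [heval]; exact hvert ρ h1 h2
          exact pc2_of_conns le_rfl hP hP hP
            (fun r hr1 hr2 => by rw [le_antisymm hr2 hr1]; exact hm)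
            (isConn_refl S ((Fh.eval ρ) 0).property hP hm)
            (isConn_refl S ((Fh.eval ρ) 0).property hP hm)
        exact ⟨P, _, hP, hvert, hrefl σ le_rfl hσσ', hrefl σ' hσσ' le_rfl⟩
      | succ j ihj =>
        intro hj1
        rw [show (((j+1:ℕ)):ℝ) = (j:ℝ)+1 from by push_cast; ring]
        have hjn : j ≤ n := by omega
        obtain ⟨M, W, hMgood, hMvert, hWσ, hWσ'⟩ := ihj (by omega)
        have hRgood : GoodPair (Rsq i j) := by
          apply hRsq_good i j hiN
          rw [div_le_one hN0, hN]
          have : (j:ℝ) ≤ (n:ℝ) := by exact_mod_cast hjn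
          linarith
        set tj : unitInterval := ut ((j:ℝ)/N) with htj
        set tj1 : unitInterval := ut (((j:ℝ)+1)/N) with htj1
        have htjc : (tj : ℝ) = (j:ℝ)/N := hnode j (by omega)
        have htj1c : (tj1 : ℝ) = ((j:ℝ)+1)/N := by
          have hh := hnode (j+1) (by omega)
          rwa [show (((j+1:ℕ)):ℝ) = (j:ℝ)+1 from by push_cast; ring] at hh
        have htjle : tj ≤ tj1 := by
          rw [← Subtype.coe_le_coe, htjc, htj1c]
          exact (div_le_div_iff_of_pos_right hN0).mpr (by linarith)
        have hmemRtj : ∀ τ : unitInterval, (σ:ℝ) ≤ (τ:ℝ) → (τ:ℝ) ≤ (σ':ℝ) →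
            memPair (Fh (τ, tj)).val (Rsq i j) := by
          intro τ h1 h2
          exact hsqm j hjn τ tj h1 h2 (by rw [htjc]) (by
            rw [htjc]
            exact (div_le_div_iff_of_pos_right hN0).mpr (by linarith))
        have hmemRtj1 : ∀ τ : unitInterval, (σ:ℝ) ≤ (τ:ℝ) → (τ:ℝ) ≤ (σ':ℝ) →
            memPair (Fh (τ, tj1)).val (Rsq i j) := by
          intro τ h1 h2
          exact hsqm j hjn τ tj1 h1 h2 (by
            rw [htj1c]
            exact (div_le_div_iff_of_pos_right hN0).mpr (by linarith)) (by rw [htj1c])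
        obtain ⟨C₁, hC₁⟩ := isConn_exists S (Fh (σ, tj)).property hMgood hRgood
          (hMvert σ le_rfl hσσ') (hmemRtj σ le_rfl hσσ')
        obtain ⟨C₁', hC₁'⟩ := isConn_exists S (Fh (σ', tj)).property hMgood hRgood
          (hMvert σ' hσσ' le_rfl) (hmemRtj σ' hσσ' le_rfl)
        -- vertical path at the node tj
        set interp : unitInterval → unitInterval :=
          fun τ => ut ((1 - (τ:ℝ)) * (σ:ℝ) + (τ:ℝ) * (σ':ℝ)) with hinterp
        have hinterp_mem : ∀ τ : unitInterval,
            (σ:ℝ) ≤ ((1 - (τ:ℝ)) * (σ:ℝ) + (τ:ℝ) * (σ':ℝ)) ∧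
            ((1 - (τ:ℝ)) * (σ:ℝ) + (τ:ℝ) * (σ':ℝ)) ≤ (σ':ℝ) :=
          fun τ => convex_aux hσσ' τ.2.1 τ.2.2
        have hinterp_coe : ∀ τ : unitInterval,
            ((interp τ : unitInterval) : ℝ) = (1 - (τ:ℝ)) * (σ:ℝ) + (τ:ℝ) * (σ':ℝ) := by
          intro τ
          apply hut_coe
          · have h1 := (hinterp_mem τ).1
            have h2 := σ.2.1
            linarith
          · have h1 := (hinterp_mem τ).2
            have h2 := σ'.2.2
            linarith
        have hinterp0 : interp 0 = σ := by
          apply Subtype.ext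
          rw [hinterp_coe 0]
          simp
        have hinterp1 : interp 1 = σ' := by
          apply Subtype.ext
          rw [hinterp_coe 1]
          simp
        let vp : Path (Fh (σ, tj)) (Fh (σ', tj)) :=
          { toFun := fun τ => Fh (interp τ, tj)
            continuous_toFun := Fh.continuous.comp
              ((continuous_projIcc.comp
                (((continuous_const.sub continuous_subtype_val).mul continuous_const).add
                  (continuous_subtype_val.mul continuous_const))).prodMk continuous_const)
            source' := by
              show Fh (interp 0, tj) = Fh (σ, tj)
              rw [hinterp0]
            target' := by
              show Fh (interp 1, tj) = Fh (σ', tj)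
              rw [hinterp1] }
        have hvp_cov : ∀ r : unitInterval, (0:unitInterval) ≤ r → r ≤ 1 →
            memPair (vp r).val M := by
          intro r _ _
          show memPair (Fh (interp r, tj)).val M
          refine hMvert (interp r) ?_ ?_ <;> rw [hinterp_coe r]
          · exact (hinterp_mem r).1
          · exact (hinterp_mem r).2
        have hvp_cov' : ∀ r : unitInterval, (0:unitInterval) ≤ r → r ≤ 1 →
            memPair (vp r).val (Rsq i j) := by
          intro r _ _
          show memPair (Fh (interp r, tj)).val (Rsq i j)
          refine hmemRtj (interp r) ?_ ?_ <;> rw [hinterp_coe r]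
          · exact (hinterp_mem r).1
          · exact (hinterp_mem r).2
        have h01 : (0:unitInterval) ≤ 1 := by
          rw [← Subtype.coe_le_coe]
          norm_num
        have hC₁vp : IsConn S (vp 0).val M (Rsq i j) C₁ := by
          rw [vp.source]; exact hC₁
        have hC₁'vp : IsConn S (vp 1).val M (Rsq i j) C₁' := by
          rw [vp.target]; exact hC₁'
        have hCeq : C₁ = C₁' :=
          isConn_const h01 hMgood hRgood hvp_cov hvp_cov' hC₁vp hC₁'vp
        have hpiece : ∀ ρ : unitInterval, (σ:ℝ) ≤ (ρ:ℝ) → (ρ:ℝ) ≤ (σ':ℝ) →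
            ∀ C : (S.F M).V ≃ₗᵢ[ℂ] (S.F (Rsq i j)).V, IsConn S (Fh (ρ, tj)).val M (Rsq i j) C →
            PathCont2 S.toPairSystem (Fh.eval ρ) tj tj1 M (Rsq i j)
              (C.trans (LinearIsometryEquiv.refl ℂ (S.F (Rsq i j)).V)) := by
          intro ρ h1 h2 C hC
          apply pc2_of_conns htjle hMgood hRgood hRgood
          · intro r hr1 hr2
            rw [heval]
            refine hsqm j hjn ρ r h1 h2 ?_ ?_
            · have hh := Subtype.coe_le_coe.mpr hr1
              rwa [htjc] at hh
            · have hh := Subtype.coe_le_coe.mpr hr2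
              rwa [htj1c] at hh
          · rw [heval]; exact hC
          · rw [heval]
            exact isConn_refl S (Fh (ρ, tj1)).property hRgood (hmemRtj1 ρ h1 h2)
        refine ⟨Rsq i j, W.trans (C₁.trans (LinearIsometryEquiv.refl ℂ (S.F (Rsq i j)).V)),
          hRgood, ?_, ?_, ?_⟩
        · intro τ h1 h2
          exact hmemRtj1 τ h1 h2
        · exact PathCont2.trans hWσ (hpiece σ le_rfl hσσ' C₁ hC₁)
        · have hp := hpiece σ' hσσ' le_rfl C₁' hC₁'
          rw [← hCeq] at hp
          exact PathCont2.trans hWσ' hp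
    -- finish the band: connect the last node to Q
    obtain ⟨M, W, hMgood, hMvert, hWσ, hWσ'⟩ := hstep (n+1) le_rfl
    rw [hnodeN] at hMvert hWσ hWσ'
    have hevalt : ∀ ρ : unitInterval, (Fh.eval ρ) 1 = a₁ := fun ρ => (Fh.eval ρ).target
    have hmema₁M : memPair a₁.val M := by
      have hh := hMvert σ le_rfl hσσ'
      rwa [← heval, hevalt] at hh
    obtain ⟨D, hD⟩ := isConn_exists S a₁.property hMgood hQ hmema₁M ha₁
    have hlast : ∀ ρ : unitInterval, (σ:ℝ) ≤ (ρ:ℝ) → (ρ:ℝ) ≤ (σ':ℝ) →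
        PathCont2 S.toPairSystem (Fh.eval ρ) 1 1 M Q
          ((LinearIsometryEquiv.refl ℂ (S.F M).V).trans D) := by
      intro ρ h1 h2
      apply pc2_of_conns le_rfl hMgood hQ hMgood
      · intro r hr1 hr2
        rw [le_antisymm hr2 hr1, hevalt]
        exact hmema₁M
      · rw [hevalt]; exact isConn_refl S a₁.property hMgood hmema₁M
      · rw [hevalt]; exact hD
    exact ⟨W.trans ((LinearIsometryEquiv.refl ℂ (S.F M).V).trans D),
      PathCont2.trans hWσ (hlast σ le_rfl hσσ'),
      PathCont2.trans hWσ' (hlast σ' hσσ' le_rfl)⟩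
  -- chain over the bands
  have hchain : ∀ i : ℕ, i ≤ n + 1 →
      ∀ W : (S.F P).V ≃ₗᵢ[ℂ] (S.F Q).V,
        IsPathCont2 S.toPairSystem (Fh.eval (ut ((i:ℝ)/N))) P Q W → W = V := by
    intro i
    induction i with
    | zero =>
      intro _ W hW
      rw [hnode0, Path.Homotopy.eval_zero] at hW
      exact pc2_unique hP hQ ha₀ ha₁ hW h
    | succ i ihi =>
      intro hi W hW
      have hin : i ≤ n := by omega
      have hσc : ((ut ((i:ℝ)/N) : unitInterval) : ℝ) = (i:ℝ)/N := hnode i (by omega)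
      have hσ'c : ((ut (((i+1:ℕ):ℝ)/N) : unitInterval) : ℝ) = ((i:ℝ)+1)/N := by
        have hh := hnode (i+1) (by omega)
        push_cast at hh ⊢
        exact hh
      obtain ⟨W0, hW0σ, hW0σ'⟩ := hband i hin (ut ((i:ℝ)/N)) (ut (((i+1:ℕ):ℝ)/N))
        (by rw [hσc]) (by rw [hσc, hσ'c]; exact (div_le_div_iff_of_pos_right hN0).mpr (by linarith))
        (by rw [hσ'c])
      have e1 : W0 = V := ihi (by omega) W0 hW0σ
      have e2 : W = W0 := pc2_unique hP hQ ha₀ ha₁ hW hW0σ'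
      rw [e2, e1]
  have hVV' := hchain (n+1) le_rfl V' (by rw [hnodeN, Path.Homotopy.eval_one]; exact h')
  exact hVV'.symm

end Homotopy

end CNet

namespace CNet

/-- Let `𝒜` be a conformal net and `H, K ∈ Rep(𝒜)`.  The path
continuation `γ^• : H(z₀) ⊠ K(ζ₀) → H(z₁) ⊠ K(ζ₁)` associated to a path `γ` in
`Conf₂(S¹)` is independent of the choice of partition of `[0,1]` (and of covering
intervals) used to define it, and homotopic paths (rel endpoints) in `Conf₂(S¹)` induce
the same path continuation. -/
theorem pathCont2_welldefined_and_homotopy_invariant {H0 : Type*} [NormedAddCommGroup H0]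
    [InnerProductSpace ℂ H0] [CompleteSpace H0] {𝒜 : ConformalNet H0}
    {H K : Type*} [NormedAddCommGroup H] [InnerProductSpace ℂ H] [CompleteSpace H]
    [NormedAddCommGroup K] [InnerProductSpace ℂ K] [CompleteSpace K]
    {ρH : NetRep 𝒜 H} {ρK : NetRep 𝒜 K}
    (S : FusionSystem 𝒜 ρH ρK) {a₀ a₁ : Conf2}
    (P Q : CPair) (hP : GoodPair P) (hQ : GoodPair Q)
    (ha₀ : memPair a₀.val P) (ha₁ : memPair a₁.val Q) :
    -- independence of the choice of partition defining the path continuation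
    (∀ (γ : Path a₀ a₁) (V V' : (S.F P).V ≃ₗᵢ[ℂ] (S.F Q).V),
      IsPathCont2 S.toPairSystem γ P Q V → IsPathCont2 S.toPairSystem γ P Q V' →
      V = V') ∧
    -- homotopy invariance (rel endpoints)
    (∀ (γ γ' : Path a₀ a₁), γ.Homotopic γ' →
      ∀ (V V' : (S.F P).V ≃ₗᵢ[ℂ] (S.F Q).V),
      IsPathCont2 S.toPairSystem γ P Q V → IsPathCont2 S.toPairSystem γ' P Q V' →
      V = V') := by
  constructor
  · intro γ V V' hV hV'
    exact pc2_unique hP hQ ha₀ ha₁ hV hV'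
  · intro γ γ' hhom V V' hV hV'
    obtain ⟨Fh⟩ := hhom
    exact homotopy_invariant Fh hP hQ ha₀ ha₁ hV hV'

end CNet
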